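/- arXiv:1306.3483 — 10 statements merged into one kernel-verified Lean document; each statement's English description precedes it below -/
import Mathlib

section
/- For a twice continuously differentiable function f : ℝ² → ℝ and an affine transformation T : ℝ² → ℝ² whose linear part has determinant J ≠ 0, the Hessian determinant of the function (x,y) ↦ f(T(x,y))/J equals (Hess f) ∘ T, where Hess f = f_xx f_yy − f_xy². Consequently, any plane curve affinely equivalent to a Hessian curve is itself a Hessian curve. -/
private lemma line_hasDerivAt (G : ℝ × ℝ → ℝ) (hG : ContDiff ℝ 1 G) (u v w z t : ℝ) :
    HasDerivAt (fun s => G (u*s + v, w*s + z))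
      (u * fderiv ℝ G (u*t+v, w*t+z) (1,0) + w * fderiv ℝ G (u*t+v, w*t+z) (0,1)) t := by
  have hγ : HasDerivAt (fun s : ℝ => ((u*s+v, w*s+z) : ℝ×ℝ)) (u, w) t := by
    simpa using (((hasDerivAt_id t).const_mul u).add_const v).prodMk
      (((hasDerivAt_id t).const_mul w).add_const z)
  have hG' := (hG.differentiable one_ne_zero (u*t+v, w*t+z)).hasFDerivAt
  have h := hG'.comp_hasDerivAt t hγ
  refine h.congr_deriv ?_
  have e : ((u, w) : ℝ×ℝ) = u • ((1:ℝ),(0:ℝ)) + w • ((0:ℝ),(1:ℝ)) := by simp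
  rw [e, map_add, map_smul, map_smul]
  simp [smul_eq_mul]

noncomputable def Hess (f : ℝ → ℝ → ℝ) (x y : ℝ) : ℝ :=
  deriv (fun t => deriv (fun s => f s y) t) x *
    deriv (fun t => deriv (fun s => f x s) t) y -
    (deriv (fun t => deriv (fun s => f s t) x) y) ^ 2

private lemma hess_first
    (f : ℝ → ℝ → ℝ) (hf : ContDiff ℝ 2 (Function.uncurry f))
    (A : Matrix (Fin 2) (Fin 2) ℝ) (b : Fin 2 → ℝ)
    (hJ : A.det ≠ 0)
    (T₁ T₂ : ℝ → ℝ → ℝ)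
    (hT₁ : ∀ x y, T₁ x y = A 0 0 * x + A 0 1 * y + b 0)
    (hT₂ : ∀ x y, T₂ x y = A 1 0 * x + A 1 1 * y + b 1) :
    ∀ x y, Hess (fun u v => f (T₁ u v) (T₂ u v) / A.det) x y
        = Hess f (T₁ x y) (T₂ x y) := by
  intro x y
  set F := Function.uncurry f with hFdef
  have hF1 : ContDiff ℝ 1 F := hf.of_le (by norm_num)
  set Fx : ℝ × ℝ → ℝ := fun p => fderiv ℝ F p ((1:ℝ),(0:ℝ)) with hFxdef
  set Fy : ℝ × ℝ → ℝ := fun p => fderiv ℝ F p ((0:ℝ),(1:ℝ)) with hFydef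
  have hFx1 : ContDiff ℝ 1 Fx :=
    (hf.fderiv_right (by norm_num)).clm_apply contDiff_const
  have hFy1 : ContDiff ℝ 1 Fy :=
    (hf.fderiv_right (by norm_num)).clm_apply contDiff_const
  have hdF : Differentiable ℝ (fderiv ℝ F) :=
    (hf.fderiv_right (m := 1) (by norm_num)).differentiable one_ne_zero
  have key : ∀ (p : ℝ×ℝ) (v w : ℝ×ℝ),
      fderiv ℝ (fun q => fderiv ℝ F q v) p w = fderiv ℝ (fderiv ℝ F) p w v := by
    intro p v w
    rw [fderiv_clm_apply (hdF p) (differentiableAt_const v)]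
    simp
  have hsym : ∀ (p : ℝ×ℝ), fderiv ℝ Fy p ((1:ℝ),(0:ℝ)) = fderiv ℝ Fx p ((0:ℝ),(1:ℝ)) := by
    intro p
    rw [hFxdef, hFydef, key, key]
    exact ((hf.contDiffAt.isSymmSndFDerivAt (by norm_num)) _ _).symm
  -- abbreviations for matrix entries
  set a := A 0 0; set b' := A 0 1; set c := A 1 0; set d := A 1 1; set J := A.det with hJdef
  have hdet : J = a * d - b' * c := Matrix.det_fin_two A
  -- the point
  set p : ℝ × ℝ := (a*x + (b'*y + b 0), c*x + (d*y + b 1)) with hp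
  set P := fderiv ℝ Fx p ((1:ℝ),(0:ℝ)) with hP
  set Q := fderiv ℝ Fx p ((0:ℝ),(1:ℝ)) with hQ
  set R := fderiv ℝ Fy p ((0:ℝ),(1:ℝ)) with hR
  have hQ2 : fderiv ℝ Fy p ((1:ℝ),(0:ℝ)) = Q := hsym p
  -- inner derivative in the first variable
  have inner_u : ∀ Y t, deriv (fun s => f (T₁ s Y) (T₂ s Y) / J) t
      = (a * Fx (a*t + (b'*Y + b 0), c*t + (d*Y + b 1))
          + c * Fy (a*t + (b'*Y + b 0), c*t + (d*Y + b 1))) / J := by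
    intro Y t
    have e : (fun s => f (T₁ s Y) (T₂ s Y) / J)
        = (fun s => F (a*s + (b'*Y + b 0), c*s + (d*Y + b 1)) / J) := by
      funext s
      show f (T₁ s Y) (T₂ s Y) / J = f (a*s + (b'*Y + b 0)) (c*s + (d*Y + b 1)) / J
      rw [hT₁, hT₂]; ring_nf
    rw [e, ((line_hasDerivAt F hF1 a (b'*Y + b 0) c (d*Y + b 1) t).div_const J).deriv]
  -- inner derivative in the second variable
  have inner_v : ∀ X t, deriv (fun s => f (T₁ X s) (T₂ X s) / J) t
      = (b' * Fx (b'*t + (a*X + b 0), d*t + (c*X + b 1))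
          + d * Fy (b'*t + (a*X + b 0), d*t + (c*X + b 1))) / J := by
    intro X t
    have e : (fun s => f (T₁ X s) (T₂ X s) / J)
        = (fun s => F (b'*s + (a*X + b 0), d*s + (c*X + b 1)) / J) := by
      funext s
      show f (T₁ X s) (T₂ X s) / J = f (b'*s + (a*X + b 0)) (d*s + (c*X + b 1)) / J
      rw [hT₁, hT₂]; ring_nf
    rw [e, ((line_hasDerivAt F hF1 b' (a*X + b 0) d (c*X + b 1) t).div_const J).deriv]
  -- second derivatives of the transformed function
  have euu : deriv (fun t => deriv (fun s => f (T₁ s y) (T₂ s y) / J) t) x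
      = (a * (a * P + c * Q) + c * (a * Q + c * R)) / J := by
    rw [funext (inner_u y)]
    have h1 := ((HasDerivAt.const_mul a (line_hasDerivAt Fx hFx1 a (b'*y + b 0) c (d*y + b 1) x)).add
      (HasDerivAt.const_mul c (line_hasDerivAt Fy hFy1 a (b'*y + b 0) c (d*y + b 1) x))).div_const J
    simp only [Pi.add_apply] at h1
    rw [h1.deriv, ← hp, hQ2]
  have evv : deriv (fun t => deriv (fun s => f (T₁ x s) (T₂ x s) / J) t) y
      = (b' * (b' * P + d * Q) + d * (b' * Q + d * R)) / J := by
    rw [funext (inner_v x)]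
    have h1 := ((HasDerivAt.const_mul b' (line_hasDerivAt Fx hFx1 b' (a*x + b 0) d (c*x + b 1) y)).add
      (HasDerivAt.const_mul d (line_hasDerivAt Fy hFy1 b' (a*x + b 0) d (c*x + b 1) y))).div_const J
    simp only [Pi.add_apply] at h1
    rw [h1.deriv]
    have hq : ((b'*y + (a*x + b 0), d*y + (c*x + b 1)) : ℝ×ℝ) = p := by
      rw [hp]; simp only [Prod.mk.injEq]; exact ⟨by ring, by ring⟩
    rw [hq, hQ2]
  have euv : deriv (fun t => deriv (fun s => f (T₁ s t) (T₂ s t) / J) x) y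
      = (a * (b' * P + d * Q) + c * (b' * Q + d * R)) / J := by
    have e : (fun t => deriv (fun s => f (T₁ s t) (T₂ s t) / J) x)
        = (fun t => (a * Fx (b'*t + (a*x + b 0), d*t + (c*x + b 1))
            + c * Fy (b'*t + (a*x + b 0), d*t + (c*x + b 1))) / J) := by
      funext t
      rw [inner_u t x]
      have hq : ((a*x + (b'*t + b 0), c*x + (d*t + b 1)) : ℝ×ℝ)
          = (b'*t + (a*x + b 0), d*t + (c*x + b 1)) := by
        simp only [Prod.mk.injEq]; exact ⟨by ring, by ring⟩
      rw [hq]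
    rw [e]
    have h1 := ((HasDerivAt.const_mul a (line_hasDerivAt Fx hFx1 b' (a*x + b 0) d (c*x + b 1) y)).add
      (HasDerivAt.const_mul c (line_hasDerivAt Fy hFy1 b' (a*x + b 0) d (c*x + b 1) y))).div_const J
    simp only [Pi.add_apply] at h1
    rw [h1.deriv]
    have hq : ((b'*y + (a*x + b 0), d*y + (c*x + b 1)) : ℝ×ℝ) = p := by
      rw [hp]; simp only [Prod.mk.injEq]; exact ⟨by ring, by ring⟩
    rw [hq, hQ2]
  -- second derivatives of f itself, at the image point
  set X := T₁ x y with hX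
  set Y := T₂ x y with hY
  have hpXY : ((X, Y) : ℝ×ℝ) = p := by
    rw [hp, hX, hY, hT₁, hT₂]; simp only [Prod.mk.injEq]; exact ⟨by ring, by ring⟩
  have dGx : ∀ (G : ℝ×ℝ → ℝ), ContDiff ℝ 1 G → ∀ (w t : ℝ),
      deriv (fun s => G (s, w)) t = fderiv ℝ G (t, w) ((1:ℝ),(0:ℝ)) := by
    intro G hG w t
    have e : (fun s => G (s, w)) = (fun s => G (1*s + 0, 0*s + w)) := by
      funext s; norm_num
    rw [e, (line_hasDerivAt G hG 1 0 0 w t).deriv]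
    norm_num
  have dGy : ∀ (G : ℝ×ℝ → ℝ), ContDiff ℝ 1 G → ∀ (w t : ℝ),
      deriv (fun s => G (w, s)) t = fderiv ℝ G (w, t) ((0:ℝ),(1:ℝ)) := by
    intro G hG w t
    have e : (fun s => G (w, s)) = (fun s => G (0*s + w, 1*s + 0)) := by
      funext s; norm_num
    rw [e, (line_hasDerivAt G hG 0 w 1 0 t).deriv]
    norm_num
  have ef1 : deriv (fun t => deriv (fun s => f s Y) t) X = P := by
    have e : (fun t => deriv (fun s => f s Y) t) = (fun t => Fx (t, Y)) := by
      funext t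
      exact dGx F hF1 Y t
    rw [e, dGx Fx hFx1 Y X, hpXY]
  have ef2 : deriv (fun t => deriv (fun s => f X s) t) Y = R := by
    have e : (fun t => deriv (fun s => f X s) t) = (fun t => Fy (X, t)) := by
      funext t
      exact dGy F hF1 X t
    rw [e, dGy Fy hFy1 X Y, hpXY]
  have ef3 : deriv (fun t => deriv (fun s => f s t) X) Y = Q := by
    have e : (fun t => deriv (fun s => f s t) X) = (fun t => Fx (X, t)) := by
      funext t
      exact dGx F hF1 t X
    rw [e, dGy Fx hFx1 X Y, hpXY]
  -- put everything together
  show deriv (fun t => deriv (fun s => f (T₁ s y) (T₂ s y) / J) t) x *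
      deriv (fun t => deriv (fun s => f (T₁ x s) (T₂ x s) / J) t) y -
      (deriv (fun t => deriv (fun s => f (T₁ s t) (T₂ s t) / J) x) y) ^ 2
    = deriv (fun t => deriv (fun s => f s Y) t) X *
      deriv (fun t => deriv (fun s => f X s) t) Y -
      (deriv (fun t => deriv (fun s => f s t) X) Y) ^ 2
  rw [euu, evv, euv, ef1, ef2, ef3]
  field_simp
  rw [hdet]
  ring

theorem hessian_affine_transform
    (f : ℝ → ℝ → ℝ) (hf : ContDiff ℝ 2 (Function.uncurry f))
    (A : Matrix (Fin 2) (Fin 2) ℝ) (b : Fin 2 → ℝ)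
    (hJ : A.det ≠ 0)
    (T₁ T₂ : ℝ → ℝ → ℝ)
    (hT₁ : ∀ x y, T₁ x y = A 0 0 * x + A 0 1 * y + b 0)
    (hT₂ : ∀ x y, T₂ x y = A 1 0 * x + A 1 1 * y + b 1) :
    (∀ x y, Hess (fun u v => f (T₁ u v) (T₂ u v) / A.det) x y
        = Hess f (T₁ x y) (T₂ x y)) ∧
    (∀ g : ℝ → ℝ → ℝ, (∀ x y, g x y = Hess f (T₁ x y) (T₂ x y)) →
      ∃ h : ℝ → ℝ → ℝ, ∀ x y, Hess h x y = g x y) := by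
  have main := hess_first f hf A b hJ T₁ T₂ hT₁ hT₂
  refine ⟨main, ?_⟩
  intro g hg
  exact ⟨fun u v => f (T₁ u v) (T₂ u v) / A.det, fun x y => by rw [main x y, hg]⟩
end

section
/- Let f(x,y) = ∏_{i=1}^n (x² + y² − m_i²) with 0 < m_1 < m_2 < ⋯ < m_n. Then the Hessian determinant of f factors as Hess f(x,y) = 4 s(x,y) t(x,y), where s(x,y) = Σ_{j=1}^n ∏_{i≠j} (x² + y² − m_i²) and t(x,y) = Σ_{j=1}^n ∏_{i≠j}(x² + y² − m_i²) + 2(x² + y²) Σ_{j=1}^n Σ_{l≠j} ∏_{i≠j,l}(x² + y² − m_i²). -/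
open Polynomial Finset

private lemma hd_aux (P : Polynomial ℝ) (c x : ℝ) :
    HasDerivAt (fun s => P.eval (s ^ 2 + c)) (P.derivative.eval (x ^ 2 + c) * (2 * x)) x := by
  have h1 : HasDerivAt (fun s : ℝ => s ^ 2 + c) (2 * x) x := by
    simpa using (hasDerivAt_pow 2 x).add_const c
  exact (P.hasDerivAt _).comp x h1

private lemma der_prod {ι : Type*} [DecidableEq ι] (s : Finset ι) (f : ι → Polynomial ℝ) :
    Polynomial.derivative (∏ i ∈ s, f i)
      = ∑ j ∈ s, (∏ i ∈ s.erase j, f i) * Polynomial.derivative (f j) := by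
  simp only [Finset.prod, Finset.sum, derivative_prod, Finset.erase_val]

open Finset in
theorem hessian_product_circles_even
    (n : ℕ) (m : Fin n → ℝ) (hpos : ∀ i, 0 < m i) (hmono : StrictMono m)
    (f : ℝ → ℝ → ℝ)
    (hf : ∀ x y, f x y = ∏ i : Fin n, (x ^ 2 + y ^ 2 - m i ^ 2)) :
    ∀ x y, Hess f x y =
      4 * (∑ j : Fin n, ∏ i ∈ univ.erase j, (x ^ 2 + y ^ 2 - m i ^ 2)) *
        ((∑ j : Fin n, ∏ i ∈ univ.erase j, (x ^ 2 + y ^ 2 - m i ^ 2)) +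
          2 * (x ^ 2 + y ^ 2) *
            ∑ j : Fin n, ∑ l ∈ univ.erase j,
              ∏ i ∈ (univ.erase j).erase l, (x ^ 2 + y ^ 2 - m i ^ 2)) := by
  intro x y
  set P : Polynomial ℝ := ∏ i : Fin n, (X - C (m i ^ 2)) with hP
  have hfe : ∀ a b : ℝ, f a b = P.eval (a ^ 2 + b ^ 2) := by
    intro a b; rw [hf]; simp [hP, eval_prod]
  have hP' : Polynomial.derivative P
      = ∑ j : Fin n, ∏ i ∈ univ.erase j, (X - C (m i ^ 2)) := by
    rw [hP, der_prod]
    simp only [derivative_sub, derivative_X, derivative_C, sub_zero, mul_one]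
  have hP'' : Polynomial.derivative (Polynomial.derivative P)
      = ∑ j : Fin n, ∑ l ∈ univ.erase j,
          ∏ i ∈ (univ.erase j).erase l, (X - C (m i ^ 2)) := by
    rw [hP', map_sum]
    refine Finset.sum_congr rfl fun j _ => ?_
    rw [der_prod]
    simp only [derivative_sub, derivative_X, derivative_C, sub_zero, mul_one]
  have hD : ∀ u : ℝ, (Polynomial.derivative P).eval u
      = ∑ j : Fin n, ∏ i ∈ univ.erase j, (u - m i ^ 2) := by
    intro u; rw [hP']
    simp only [eval_finset_sum, eval_prod, eval_sub, eval_X, eval_C]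
  have hQ : ∀ u : ℝ, (Polynomial.derivative (Polynomial.derivative P)).eval u
      = ∑ j : Fin n, ∑ l ∈ univ.erase j,
          ∏ i ∈ (univ.erase j).erase l, (u - m i ^ 2) := by
    intro u; rw [hP'']
    simp only [eval_finset_sum, eval_prod, eval_sub, eval_X, eval_C]
  -- first partial derivatives
  have hdx : ∀ b : ℝ, deriv (fun s => f s b)
      = fun s => (Polynomial.derivative P).eval (s ^ 2 + b ^ 2) * (2 * s) := by
    intro b; funext s
    have : (fun s => f s b) = fun s => P.eval (s ^ 2 + b ^ 2) := funext fun s => hfe s b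
    rw [this]; exact (hd_aux P (b ^ 2) s).deriv
  have hdy : deriv (fun s => f x s)
      = fun s => (Polynomial.derivative P).eval (s ^ 2 + x ^ 2) * (2 * s) := by
    funext s
    have : (fun s => f x s) = fun s => P.eval (s ^ 2 + x ^ 2) := by
      funext s; rw [hfe]; ring_nf
    rw [this]; exact (hd_aux P (x ^ 2) s).deriv
  -- second partials
  have hdxx : deriv (fun t => deriv (fun s => f s y) t) x
      = (Polynomial.derivative (Polynomial.derivative P)).eval (x ^ 2 + y ^ 2) * (2 * x) * (2 * x)
        + (Polynomial.derivative P).eval (x ^ 2 + y ^ 2) * 2 := by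
    rw [hdx y]
    exact (((hd_aux (Polynomial.derivative P) (y ^ 2) x)).mul
      (by simpa using (hasDerivAt_id x).const_mul 2)).deriv
  have hdyy : deriv (fun t => deriv (fun s => f x s) t) y
      = (Polynomial.derivative (Polynomial.derivative P)).eval (y ^ 2 + x ^ 2) * (2 * y) * (2 * y)
        + (Polynomial.derivative P).eval (y ^ 2 + x ^ 2) * 2 := by
    rw [hdy]
    exact (((hd_aux (Polynomial.derivative P) (x ^ 2) y)).mul
      (by simpa using (hasDerivAt_id y).const_mul 2)).deriv
  have hdxy : deriv (fun t => deriv (fun s => f s t) x) y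
      = (Polynomial.derivative (Polynomial.derivative P)).eval (y ^ 2 + x ^ 2) * (2 * y)
        * (2 * x) := by
    have h1 : (fun t => deriv (fun s => f s t) x)
        = fun t => (Polynomial.derivative P).eval (t ^ 2 + x ^ 2) * (2 * x) := by
      funext t
      rw [hdx t]
      ring_nf
    rw [h1]
    exact ((hd_aux (Polynomial.derivative P) (x ^ 2) y).mul_const (2 * x)).deriv
  have hc : y ^ 2 + x ^ 2 = x ^ 2 + y ^ 2 := by ring
  rw [Hess, hdxx, hdyy, hdxy, hc, hD, hQ]
  ring
end

section
/- Let f(x,y) = ∏_{i=1}^n (x² + y² − m_i²) with 0 < m_1 < ⋯ < m_n. Then there exists R > 0 such that for all (x,y) with x² + y² > R², Hess f(x,y) > 0; in particular, for x² + y² > m_n² all points (x, y, f(x,y)) on the graph of f are elliptic (Hess f > 0 outside the largest circle). -/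
open Polynomial

lemma poly_aux {ι : Type*} [DecidableEq ι] (c : ι → ℝ) (r : ℝ)
    (h : ∀ i, c i < r) (s : Finset ι) :
    0 < (∏ i ∈ s, (X - C (c i)) : ℝ[X]).eval r ∧
    0 ≤ (derivative (∏ i ∈ s, (X - C (c i)) : ℝ[X])).eval r ∧
    0 ≤ (derivative (derivative (∏ i ∈ s, (X - C (c i)) : ℝ[X]))).eval r ∧
    (s.Nonempty → 0 < (derivative (∏ i ∈ s, (X - C (c i)) : ℝ[X])).eval r) := by
  induction s using Finset.induction with
  | empty => simp
  | @insert a s ha ih =>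
    obtain ⟨h0, h1, h2, _⟩ := ih
    have hra0 : 0 < r - c a := sub_pos.2 (h a)
    rw [Finset.prod_insert ha]
    simp only [derivative_mul, derivative_sub, derivative_X, derivative_C,
      sub_zero, one_mul, eval_add, eval_mul, eval_sub, eval_X, eval_C,
      derivative_add, derivative_one, zero_mul, add_zero, zero_add, eval_one]
    refine ⟨mul_pos hra0 h0, ?_, ?_, fun _ => ?_⟩ <;> nlinarith

lemma sq_hasDerivAt (y x : ℝ) : HasDerivAt (fun s : ℝ => s ^ 2 + y ^ 2) (2 * x) x := by
  simpa using ((hasDerivAt_pow 2 x).add_const (y ^ 2))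

lemma comp_hasDerivAt (P : ℝ[X]) (y x : ℝ) :
    HasDerivAt (fun s : ℝ => P.eval (s ^ 2 + y ^ 2))
      (P.derivative.eval (x ^ 2 + y ^ 2) * (2 * x)) x :=
  by have := (P.hasDerivAt (x ^ 2 + y ^ 2)).comp x (sq_hasDerivAt y x); exact this

theorem hessian_positive_outside_largest_circle
    (n : ℕ) (hn : 0 < n) (m : Fin n → ℝ) (hpos : ∀ i, 0 < m i)
    (hmono : StrictMono m)
    (f : ℝ → ℝ → ℝ)
    (hf : ∀ x y, f x y = ∏ i : Fin n, (x ^ 2 + y ^ 2 - m i ^ 2)) :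
    (∃ R > (0 : ℝ), ∀ x y : ℝ, x ^ 2 + y ^ 2 > R ^ 2 → 0 < Hess f x y) ∧
    (∀ x y : ℝ, x ^ 2 + y ^ 2 > (m ⟨n - 1, Nat.sub_lt hn one_pos⟩) ^ 2 →
      0 < Hess f x y) := by
  classical
  set last : Fin n := ⟨n - 1, Nat.sub_lt hn one_pos⟩ with hlast
  have key : ∀ x y : ℝ, x ^ 2 + y ^ 2 > (m last) ^ 2 → 0 < Hess f x y := by
    intro x y hxy
    set P : ℝ[X] := ∏ i : Fin n, (X - C (m i ^ 2)) with hP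
    have hfe : ∀ a b : ℝ, f a b = P.eval (a ^ 2 + b ^ 2) := by
      intro a b; rw [hf]; simp [hP, eval_prod]
    -- first derivatives
    have hd1 : ∀ (b a : ℝ), HasDerivAt (fun s => f s b)
        (P.derivative.eval (a ^ 2 + b ^ 2) * (2 * a)) a := by
      intro b a
      have : (fun s => f s b) = fun s => P.eval (s ^ 2 + b ^ 2) :=
        funext fun s => hfe s b
      rw [this]; exact comp_hasDerivAt P b a
    have hd2 : ∀ (a b : ℝ), HasDerivAt (fun s => f a s)
        (P.derivative.eval (a ^ 2 + b ^ 2) * (2 * b)) b := by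
      intro a b
      have : (fun s => f a s) = fun s => P.eval (s ^ 2 + a ^ 2) := by
        funext s; rw [hfe]; ring_nf
      rw [this]
      have := comp_hasDerivAt P a b
      simpa [add_comm] using this
    set A : ℝ := P.derivative.eval (x ^ 2 + y ^ 2) with hA
    set B : ℝ := P.derivative.derivative.eval (x ^ 2 + y ^ 2) with hB
    -- f_xx
    have hfxx : deriv (fun t => deriv (fun s => f s y) t) x
        = B * (2 * x) * (2 * x) + A * 2 := by
      have heq : (fun t => deriv (fun s => f s y) t)
          = fun t => P.derivative.eval (t ^ 2 + y ^ 2) * (2 * t) :=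
        funext fun t => (hd1 y t).deriv
      rw [heq]
      have h1 := comp_hasDerivAt P.derivative y x
      have h2 : HasDerivAt (fun t : ℝ => 2 * t) 2 x := by
        simpa using (hasDerivAt_id x).const_mul (2 : ℝ)
      exact (h1.mul h2).deriv
    -- f_yy
    have hfyy : deriv (fun t => deriv (fun s => f x s) t) y
        = B * (2 * y) * (2 * y) + A * 2 := by
      have heq : (fun t => deriv (fun s => f x s) t)
          = fun t => P.derivative.eval (x ^ 2 + t ^ 2) * (2 * t) :=
        funext fun t => (hd2 x t).deriv
      rw [heq]
      have h1 : HasDerivAt (fun t : ℝ => P.derivative.eval (x ^ 2 + t ^ 2))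
          (B * (2 * y)) y := by
        have := comp_hasDerivAt P.derivative x y
        simpa [add_comm, hB] using this
      have h2 : HasDerivAt (fun t : ℝ => 2 * t) 2 y := by
        simpa using (hasDerivAt_id y).const_mul (2 : ℝ)
      exact (h1.mul h2).deriv
    -- f_xy
    have hfxy : deriv (fun t => deriv (fun s => f s t) x) y
        = B * (2 * y) * (2 * x) := by
      have heq : (fun t => deriv (fun s => f s t) x)
          = fun t => P.derivative.eval (x ^ 2 + t ^ 2) * (2 * x) :=
        funext fun t => (hd1 t x).deriv
      rw [heq]
      have h1 : HasDerivAt (fun t : ℝ => P.derivative.eval (x ^ 2 + t ^ 2))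
          (B * (2 * y)) y := by
        have := comp_hasDerivAt P.derivative x y
        simpa [add_comm, hB] using this
      exact (h1.mul_const (2 * x)).deriv
    have hHess : Hess f x y = 8 * (x ^ 2 + y ^ 2) * A * B + 4 * A ^ 2 := by
      rw [Hess, hfxx, hfyy, hfxy]; ring
    -- positivity
    have hlt : ∀ i, m i ^ 2 < x ^ 2 + y ^ 2 := by
      intro i
      refine lt_of_le_of_lt ?_ hxy
      have hle : m i ≤ m last := by
        apply hmono.monotone
        exact Fin.mk_le_mk.mpr (Nat.le_sub_one_of_lt i.isLt) |>.trans_eq rfl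
      exact pow_le_pow_left₀ (hpos i).le hle 2
    obtain ⟨h0, h1, h2, h3⟩ := poly_aux (fun i => m i ^ 2) (x ^ 2 + y ^ 2) hlt Finset.univ
    have hApos : 0 < A := h3 ⟨last, Finset.mem_univ _⟩
    have hBnn : 0 ≤ B := h2
    have hrpos : 0 < x ^ 2 + y ^ 2 :=
      lt_trans (pow_pos (hpos last) 2) hxy
    rw [hHess]
    nlinarith [mul_nonneg (mul_nonneg hrpos.le hApos.le) hBnn, pow_pos hApos 2]
  refine ⟨⟨m last, hpos last, fun x y h => key x y h⟩, key⟩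
end

section
/- Let f(x,y) = ∏_{i=1}^n (x² + y² − m_i²) with 0 < m_1 < ⋯ < m_n and n ≥ 2. Then the zero set of Hess f in ℝ² is a disjoint union of exactly 2(n−1) circles centered at the origin, i.e. there exist radii 0 < r_1 < r_2 < ⋯ < r_{2(n−1)} such that Hess f(x,y) = 0 iff x² + y² = r_k² for some k. -/
open Polynomial

lemma deriv_inner (P : ℝ[X]) (y : ℝ) :
    (deriv fun s : ℝ => P.eval (s ^ 2 + y ^ 2)) =
      fun x => P.derivative.eval (x ^ 2 + y ^ 2) * (2 * x) := by
  funext x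
  have h : HasDerivAt (fun s : ℝ => P.eval (s ^ 2 + y ^ 2))
      (P.derivative.eval (x ^ 2 + y ^ 2) * (2 * x ^ 1)) x :=
    (P.hasDerivAt _).comp x (((hasDerivAt_pow 2 x).add_const (y ^ 2)))
  simpa using h.deriv

lemma hess_poly (P : ℝ[X]) (f : ℝ → ℝ → ℝ)
    (hf : ∀ x y, f x y = P.eval (x ^ 2 + y ^ 2)) (x y : ℝ) :
    Hess f x y = 4 * ((X * (derivative P) ^ 2 : ℝ[X]).derivative).eval (x ^ 2 + y ^ 2) := by
  set d := P.derivative with hd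
  set e := d.derivative with he
  have h1 : (fun s : ℝ => f s y) = fun s => P.eval (s ^ 2 + y ^ 2) := funext fun s => hf s y
  have h2 : (fun s : ℝ => f x s) = fun s => P.eval (x ^ 2 + s ^ 2) := funext fun s => hf x s
  -- f_xx
  have hxx : deriv (fun t => deriv (fun s => f s y) t) x =
      e.eval (x ^ 2 + y ^ 2) * (2 * x) * (2 * x) + d.eval (x ^ 2 + y ^ 2) * 2 := by
    rw [h1, deriv_inner]
    have hA : HasDerivAt (fun t : ℝ => d.eval (t ^ 2 + y ^ 2))
        (e.eval (x ^ 2 + y ^ 2) * (2 * x ^ 1)) x :=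
      (d.hasDerivAt _).comp x ((hasDerivAt_pow 2 x).add_const (y ^ 2))
    have hB : HasDerivAt (fun t : ℝ => 2 * t) 2 x := by
      simpa using (hasDerivAt_id x).const_mul (2 : ℝ)
    have := (hA.mul hB).deriv
    simp only [pow_one] at this
    exact this
  -- f_yy
  have hyy : deriv (fun t => deriv (fun s => f x s) t) y =
      e.eval (x ^ 2 + y ^ 2) * (2 * y) * (2 * y) + d.eval (x ^ 2 + y ^ 2) * 2 := by
    rw [h2]
    have hin : (deriv fun s : ℝ => P.eval (x ^ 2 + s ^ 2)) =
        fun t => d.eval (x ^ 2 + t ^ 2) * (2 * t) := by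
      funext t
      have h : HasDerivAt (fun s : ℝ => P.eval (x ^ 2 + s ^ 2))
          (d.eval (x ^ 2 + t ^ 2) * (2 * t ^ 1)) t :=
        (P.hasDerivAt _).comp t (((hasDerivAt_pow 2 t).const_add (x ^ 2)))
      simpa using h.deriv
    rw [hin]
    have hA : HasDerivAt (fun t : ℝ => d.eval (x ^ 2 + t ^ 2))
        (e.eval (x ^ 2 + y ^ 2) * (2 * y ^ 1)) y :=
      (d.hasDerivAt _).comp y ((hasDerivAt_pow 2 y).const_add (x ^ 2))
    have hB : HasDerivAt (fun t : ℝ => 2 * t) 2 y := by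
      simpa using (hasDerivAt_id y).const_mul (2 : ℝ)
    have := (hA.mul hB).deriv
    simp only [pow_one] at this
    exact this
  -- f_xy
  have hxy : deriv (fun t => deriv (fun s => f s t) x) y =
      e.eval (x ^ 2 + y ^ 2) * (2 * y) * (2 * x) := by
    have h3 : (fun t : ℝ => deriv (fun s => f s t) x) =
        fun t => d.eval (x ^ 2 + t ^ 2) * (2 * x) := by
      funext t
      have h1t : (fun s : ℝ => f s t) = fun s => P.eval (s ^ 2 + t ^ 2) :=
        funext fun s => hf s t
      rw [h1t, deriv_inner]
    rw [h3]
    have hA : HasDerivAt (fun t : ℝ => d.eval (x ^ 2 + t ^ 2))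
        (e.eval (x ^ 2 + y ^ 2) * (2 * y ^ 1)) y :=
      (d.hasDerivAt _).comp y ((hasDerivAt_pow 2 y).const_add (x ^ 2))
    have := (hA.mul_const (2 * x)).deriv
    simpa using this
  have hR : ((X * d ^ 2 : ℝ[X]).derivative).eval (x ^ 2 + y ^ 2) =
      d.eval (x ^ 2 + y ^ 2) ^ 2 +
        (x ^ 2 + y ^ 2) * (2 * d.eval (x ^ 2 + y ^ 2) * e.eval (x ^ 2 + y ^ 2)) := by
    simp [Polynomial.derivative_mul, Polynomial.derivative_pow, ← he]
  rw [Hess, hxx, hyy, hxy, hR]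
  ring

theorem hessian_zero_set_is_concentric_circles
    (n : ℕ) (hn : 2 ≤ n) (m : Fin n → ℝ) (hpos : ∀ i, 0 < m i)
    (hmono : StrictMono m)
    (f : ℝ → ℝ → ℝ)
    (hf : ∀ x y, f x y = ∏ i : Fin n, (x ^ 2 + y ^ 2 - m i ^ 2)) :
    ∃ r : Fin (2 * (n - 1)) → ℝ, StrictMono r ∧ (∀ k, 0 < r k) ∧
      ∀ x y : ℝ, Hess f x y = 0 ↔ ∃ k, x ^ 2 + y ^ 2 = r k ^ 2 := by
  classical
  set a : Fin n → ℝ := fun i => m i ^ 2 with ha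
  have hapos : ∀ i, 0 < a i := fun i => pow_pos (hpos i) 2
  have hamono : StrictMono a := fun i j h =>
    pow_lt_pow_left₀ (hmono h) (hpos i).le two_ne_zero
  set P : Polynomial ℝ := ∏ i, (Polynomial.X - Polynomial.C (a i)) with hP
  have hfP : ∀ x y, f x y = P.eval (x ^ 2 + y ^ 2) := by
    intro x y
    rw [hf, hP]
    simp [Polynomial.eval_prod, ha]
  set d := P.derivative with hd
  set G : Polynomial ℝ := Polynomial.X * d ^ 2 with hG
  set D := G.derivative with hD
  have hProot : ∀ i, P.eval (a i) = 0 := by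
    intro i
    rw [hP, Polynomial.eval_prod]
    exact Finset.prod_eq_zero (Finset.mem_univ i) (by simp)
  -- roots of d between consecutive roots of P
  have key : ∀ i : Fin (n - 1), ∃ z,
      (a ⟨i.1, by have := i.2; omega⟩ < z ∧ z < a ⟨i.1 + 1, by have := i.2; omega⟩) ∧
        d.eval z = 0 := by
    intro i
    have hlt : a ⟨i.1, by have := i.2; omega⟩ < a ⟨i.1 + 1, by have := i.2; omega⟩ :=
      hamono (by simp [Fin.lt_def])
    obtain ⟨z, hz, hz0⟩ := exists_deriv_eq_zero hlt P.continuousOn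
      ((hProot _).trans (hProot _).symm)
    refine ⟨z, ⟨hz.1, hz.2⟩, ?_⟩
    rwa [Polynomial.deriv] at hz0
  choose c hc hcroot using key
  have hcpos : ∀ i, 0 < c i := fun i => (hapos _).trans (hc i).1
  have hclt : ∀ i j : Fin (n - 1), i.1 < j.1 → c i < c j := by
    intro i j hij
    have h1 : c i < a ⟨i.1 + 1, by have := i.2; omega⟩ := (hc i).2
    have h2 : a ⟨j.1, by have := j.2; omega⟩ < c j := (hc j).1
    have h3 : a ⟨i.1 + 1, by have := i.2; omega⟩ ≤ a ⟨j.1, by have := j.2; omega⟩ :=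
      hamono.monotone (by simp [Fin.le_def]; omega)
    linarith
  -- the combined sequence of roots of G : 0, c 0, ..., c (n-2)
  set t : Fin n → ℝ := fun j =>
    if h : j.1 = 0 then 0 else c ⟨j.1 - 1, by have := j.2; omega⟩ with ht
  have htpos : ∀ j : Fin n, 0 < j.1 → 0 < t j := by
    intro j hj
    rw [ht]
    simp only
    rw [dif_neg (by omega)]
    exact hcpos _
  have htlt : ∀ i j : Fin n, i.1 < j.1 → t i < t j := by
    intro i j hij
    rw [ht]
    simp only
    rcases Nat.eq_zero_or_pos i.1 with h0 | h0
    · rw [dif_pos h0, dif_neg (by omega)]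
      exact hcpos _
    · rw [dif_neg (by omega), dif_neg (by omega)]
      exact hclt _ _ (by show i.1 - 1 < j.1 - 1; omega)
  have hGroot : ∀ j : Fin n, G.eval (t j) = 0 := by
    intro j
    rw [hG, ht]
    simp only
    rcases Nat.eq_zero_or_pos j.1 with h0 | h0
    · rw [dif_pos h0]; simp
    · rw [dif_neg (by omega)]
      simp [hcroot]
  -- roots of D between consecutive roots of G
  have key2 : ∀ i : Fin (n - 1), ∃ z,
      (t ⟨i.1, by have := i.2; omega⟩ < z ∧ z < t ⟨i.1 + 1, by have := i.2; omega⟩) ∧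
        D.eval z = 0 := by
    intro i
    have hlt : t ⟨i.1, by have := i.2; omega⟩ < t ⟨i.1 + 1, by have := i.2; omega⟩ :=
      htlt _ _ (by simp)
    obtain ⟨z, hz, hz0⟩ := exists_deriv_eq_zero hlt G.continuousOn
      ((hGroot _).trans (hGroot _).symm)
    refine ⟨z, ⟨hz.1, hz.2⟩, ?_⟩
    rwa [Polynomial.deriv] at hz0
  choose b hb hbroot using key2
  have hcD : ∀ i, D.eval (c i) = 0 := by
    intro i
    rw [hD, hG]
    simp [Polynomial.derivative_mul, Polynomial.derivative_pow, hcroot]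
  -- degree computations
  have hPdeg : P.natDegree = n := by
    rw [hP, Polynomial.natDegree_prod _ _ (fun i _ => Polynomial.X_sub_C_ne_zero (a i))]
    simp
  have hddegdeg : d.degree = ((n - 1 : ℕ) : WithBot ℕ) := by
    rw [hd, ← hPdeg]
    exact Polynomial.degree_derivative_eq P (by omega)
  have hdne : d ≠ 0 := by
    intro h0
    rw [h0, Polynomial.degree_zero] at hddegdeg
    exact (by simp at hddegdeg)
  have hddeg : d.natDegree = n - 1 := Polynomial.natDegree_eq_of_degree_eq_some hddegdeg
  have hGne : G ≠ 0 := mul_ne_zero Polynomial.X_ne_zero (pow_ne_zero _ hdne)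
  have hGdeg : G.natDegree = 2 * n - 1 := by
    rw [hG, Polynomial.natDegree_mul Polynomial.X_ne_zero (pow_ne_zero _ hdne),
      Polynomial.natDegree_X, Polynomial.natDegree_pow, hddeg]
    omega
  have hDdegdeg : D.degree = ((2 * n - 2 : ℕ) : WithBot ℕ) := by
    rw [hD]
    have := Polynomial.degree_derivative_eq G (by omega)
    rw [hGdeg] at this
    convert this using 2
    omega
  have hDne : D ≠ 0 := by
    intro h0
    rw [h0, Polynomial.degree_zero] at hDdegdeg
    exact (by simp at hDdegdeg)
  have hDdeg : D.natDegree = 2 * n - 2 := Polynomial.natDegree_eq_of_degree_eq_some hDdegdeg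
  -- the finset of roots
  set S : Finset ℝ := Finset.univ.image b ∪ Finset.univ.image c with hS
  have hbc : ∀ i j : Fin (n - 1), b i ≠ c j := by
    intro i j heq
    have hbl : t ⟨i.1, by have := i.2; omega⟩ < b i := (hb i).1
    have hbr : b i < t ⟨i.1 + 1, by have := i.2; omega⟩ := (hb i).2
    have htr : t ⟨i.1 + 1, by have := i.2; omega⟩ = c ⟨i.1, by have := i.2; omega⟩ := by
      rw [ht]; simp
    rcases le_or_gt i.1 j.1 with hij | hij
    · have : c ⟨i.1, by have := i.2; omega⟩ ≤ c j := by
        rcases eq_or_lt_of_le hij with h | h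
        · exact le_of_eq (congrArg c (Fin.ext h))
        · exact (hclt _ _ h).le
      rw [htr] at hbr
      exact absurd heq (show b i ≠ c j from ne_of_lt (by linarith))
    · have htl : t ⟨i.1, by have := i.2; omega⟩ = c ⟨i.1 - 1, by have := i.2; omega⟩ := by
        rw [ht]
        simp only
        rw [dif_neg (by omega)]
      have : c j ≤ c ⟨i.1 - 1, by have := i.2; omega⟩ := by
        rcases Nat.lt_or_ge j.1 (i.1 - 1) with h | h
        · exact (hclt _ _ (by show j.1 < i.1 - 1; omega)).le
        · exact le_of_eq (congrArg c (Fin.ext (by show j.1 = i.1 - 1; omega)))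
      rw [htl] at hbl
      exact absurd heq (show b i ≠ c j from ne_of_gt (by linarith))
  have hblt : ∀ i j : Fin (n - 1), i.1 < j.1 → b i < b j := by
    intro i j hij
    have h1 : b i < t ⟨i.1 + 1, by have := i.2; omega⟩ := (hb i).2
    have h2 : t ⟨j.1, by have := j.2; omega⟩ < b j := (hb j).1
    have h3 : t ⟨i.1 + 1, by have := i.2; omega⟩ ≤ t ⟨j.1, by have := j.2; omega⟩ := by
      rcases Nat.lt_or_ge (i.1 + 1) j.1 with h | h
      · exact (htlt _ _ (by show i.1 + 1 < j.1; omega)).le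
      · exact le_of_eq (congrArg t (Fin.ext (by show i.1 + 1 = j.1; omega)))
    linarith
  have hbinj : Function.Injective b := by
    intro i j heq
    by_contra hne
    have hne' : i.1 ≠ j.1 := fun h => hne (Fin.ext h)
    rcases Nat.lt_or_ge i.1 j.1 with h | h
    · exact absurd heq (hblt _ _ h).ne
    · exact absurd heq.symm (hblt _ _ (by omega)).ne
  have hcinj : Function.Injective c := by
    intro i j heq
    by_contra hne
    have : i.1 ≠ j.1 := fun h => hne (Fin.ext h)
    rcases Nat.lt_or_ge i.1 j.1 with h | h
    · exact absurd heq (hclt _ _ h).ne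
    · exact absurd heq.symm (hclt _ _ (by omega)).ne
  have hcard : S.card = 2 * (n - 1) := by
    rw [hS, Finset.card_union_of_disjoint]
    · rw [Finset.card_image_of_injective _ hbinj, Finset.card_image_of_injective _ hcinj]
      simp
      omega
    · rw [Finset.disjoint_left]
      rintro u hu hu'
      obtain ⟨i, -, rfl⟩ := Finset.mem_image.mp hu
      obtain ⟨j, -, hj⟩ := Finset.mem_image.mp hu'
      exact hbc i j hj.symm
  have hSroot : ∀ u ∈ S, D.eval u = 0 := by
    intro u hu
    rcases Finset.mem_union.mp hu with h | h
    · obtain ⟨i, -, rfl⟩ := Finset.mem_image.mp h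
      exact hbroot i
    · obtain ⟨i, -, rfl⟩ := Finset.mem_image.mp h
      exact hcD i
  have hSpos : ∀ u ∈ S, 0 < u := by
    intro u hu
    rcases Finset.mem_union.mp hu with h | h
    · obtain ⟨i, -, rfl⟩ := Finset.mem_image.mp h
      have h1 : t ⟨i.1, by have := i.2; omega⟩ < b i := (hb i).1
      have h0 : (0:ℝ) ≤ t ⟨i.1, by have := i.2; omega⟩ := by
        rcases Nat.eq_zero_or_pos i.1 with h | h
        · rw [ht]; simp only; rw [dif_pos h]
        · exact (htpos _ (by show 0 < i.1; omega)).le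
      linarith
    · obtain ⟨i, -, rfl⟩ := Finset.mem_image.mp h
      exact hcpos i
  -- S is exactly the root set of D
  have hSeq : S = D.roots.toFinset := by
    apply Finset.eq_of_subset_of_card_le
    · intro u hu
      rw [Multiset.mem_toFinset, Polynomial.mem_roots hDne]
      exact hSroot u hu
    · calc D.roots.toFinset.card ≤ Multiset.card D.roots := Multiset.toFinset_card_le _
        _ ≤ D.natDegree := Polynomial.card_roots' D
        _ = 2 * n - 2 := hDdeg
        _ = S.card := by rw [hcard]; omega
  have hiff : ∀ u : ℝ, D.eval u = 0 ↔ u ∈ S := by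
    intro u
    constructor
    · intro h
      rw [hSeq, Multiset.mem_toFinset, Polynomial.mem_roots hDne]
      exact h
    · exact hSroot u
  -- final assembly
  set φ := S.orderIsoOfFin hcard with hφ
  refine ⟨fun k => Real.sqrt ((φ k : ℝ)), ?_, ?_, ?_⟩
  · intro k l hkl
    have h1 : (φ k : ℝ) < (φ l : ℝ) := by
      exact_mod_cast φ.strictMono hkl
    exact Real.sqrt_lt_sqrt (hSpos _ (φ k).2).le h1
  · intro k
    exact Real.sqrt_pos.mpr (hSpos _ (φ k).2)
  · intro x y
    rw [hess_poly P f hfP x y]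
    constructor
    · intro h
      have h0 : D.eval (x ^ 2 + y ^ 2) = 0 := by linarith
      have hmem : (x ^ 2 + y ^ 2) ∈ S := (hiff _).mp h0
      refine ⟨φ.symm ⟨_, hmem⟩, ?_⟩
      rw [Real.sq_sqrt]
      · rw [φ.apply_symm_apply]
      · rw [φ.apply_symm_apply]
        exact (hSpos _ hmem).le
    · rintro ⟨k, hk⟩
      have hmem : ((φ k : ℝ)) ∈ S := (φ k).2
      have : x ^ 2 + y ^ 2 = (φ k : ℝ) := by
        rw [hk, Real.sq_sqrt (hSpos _ hmem).le]
      rw [this]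
      have h0 : D.eval ((φ k : ℝ)) = 0 := (hiff _).mpr hmem
      have hDef : (Polynomial.X * Polynomial.derivative P ^ 2).derivative = D := rfl
      rw [hDef, h0]
      ring
end

section
/- Let s̃(x) = Σ_{j=1}^n (j² + 1) ∏_{i≠j}(x² − i²) for n ≥ 2. Then s̃ is a polynomial of degree 2n−2 with exactly 2n−2 simple real roots, none of which is zero, and exactly n−1 of them are positive. -/
open Finset Polynomial

private lemma s_sign_lemma (n k : ℕ) (hk1 : 1 ≤ k) (hkn : k ≤ n) :
    0 < (-1:ℝ)^(n-k) * ∏ i ∈ (Icc 1 n).erase k, ((k:ℝ)^2 - (i:ℝ)^2) := by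
  have hsign : (-1:ℝ)^(n-k) = ∏ i ∈ (Icc 1 n).erase k, (if k < i then (-1:ℝ) else 1) := by
    rw [Finset.prod_ite, Finset.prod_const, Finset.prod_const, one_pow, mul_one]
    congr 1
    have h : ((Icc 1 n).erase k).filter (fun i => k < i) = Icc (k+1) n := by
      ext i; simp only [Finset.mem_filter, Finset.mem_erase, Finset.mem_Icc]; omega
    rw [h, Nat.card_Icc]; omega
  rw [hsign, ← Finset.prod_mul_distrib]
  apply Finset.prod_pos
  intro i hi
  simp only [Finset.mem_erase, Finset.mem_Icc] at hi
  by_cases h : k < i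
  · simp only [if_pos h]
    have : (k:ℝ) < i := by exact_mod_cast h
    have hk0 : (0:ℝ) ≤ k := by positivity
    nlinarith
  · simp only [if_neg h, one_mul]
    have hik : i < k := by omega
    have h1 : (i:ℝ) < k := by exact_mod_cast hik
    have h2 : (0:ℝ) ≤ i := by positivity
    nlinarith

open Finset in
theorem s_polynomial_roots
    (n : ℕ) (hn : 2 ≤ n) (s : ℝ → ℝ)
    (hs : ∀ x, s x = ∑ j ∈ Icc 1 n, ((j : ℝ) ^ 2 + 1) *
      ∏ i ∈ (Icc 1 n).erase j, (x ^ 2 - (i : ℝ) ^ 2)) :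
    (∃ P : Polynomial ℝ, P.natDegree = 2 * n - 2 ∧ ∀ x, P.eval x = s x) ∧
    {x : ℝ | s x = 0}.ncard = 2 * n - 2 ∧
    (∀ x, s x = 0 → deriv s x ≠ 0) ∧
    s 0 ≠ 0 ∧
    {x : ℝ | 0 < x ∧ s x = 0}.ncard = n - 1 := by
  classical
  set P : Polynomial ℝ := ∑ j ∈ Icc 1 n, Polynomial.C ((j:ℝ)^2+1) *
      ∏ i ∈ (Icc 1 n).erase j, (Polynomial.X^2 - Polynomial.C ((i:ℝ)^2)) with hP
  have hPs : ∀ x, P.eval x = s x := by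
    intro x
    rw [hs, hP]
    simp [Polynomial.eval_finset_sum, Polynomial.eval_prod]
  have hs_fun : s = fun y => P.eval y := funext fun y => (hPs y).symm
  -- degree facts
  have hQmonic : ∀ j, (∏ i ∈ (Icc 1 n).erase j,
      (Polynomial.X^2 - Polynomial.C ((i:ℝ)^2))).Monic := by
    intro j
    exact Polynomial.monic_prod_of_monic _ _ fun i _ =>
      Polynomial.monic_X_pow_sub_C _ (by norm_num)
  have hQdeg : ∀ j ∈ Icc 1 n, (∏ i ∈ (Icc 1 n).erase j,
      (Polynomial.X^2 - Polynomial.C ((i:ℝ)^2))).natDegree = 2*n-2 := by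
    intro j hj
    rw [Polynomial.natDegree_prod]
    · have : ∀ i ∈ (Icc 1 n).erase j,
          (Polynomial.X^2 - Polynomial.C ((i:ℝ)^2)).natDegree = 2 := fun i _ =>
        Polynomial.natDegree_X_pow_sub_C
      rw [Finset.sum_congr rfl this, Finset.sum_const, Finset.card_erase_of_mem hj,
        Nat.card_Icc, smul_eq_mul]
      omega
    · intro i _
      exact (Polynomial.monic_X_pow_sub_C _ (by norm_num : 2 ≠ 0)).ne_zero
  have hcoeff : P.coeff (2*n-2) = ∑ j ∈ Icc 1 n, ((j:ℝ)^2+1) := by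
    rw [hP, Polynomial.finset_sum_coeff]
    apply Finset.sum_congr rfl
    intro j hj
    rw [Polynomial.coeff_C_mul, ← hQdeg j hj, (hQmonic j).coeff_natDegree, mul_one]
  have hcoeffpos : 0 < P.coeff (2*n-2) := by
    rw [hcoeff]
    apply Finset.sum_pos (fun j _ => by positivity) ⟨1, by simp; omega⟩
  have hP0 : P ≠ 0 := fun h => by simp [h] at hcoeffpos
  have hdeg : P.natDegree = 2*n-2 := by
    have h1 : 2*n-2 ≤ P.natDegree := Polynomial.le_natDegree_of_ne_zero hcoeffpos.ne'
    have h2 : P.natDegree ≤ 2*n-2 := by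
      rw [hP]
      apply Polynomial.natDegree_sum_le_of_forall_le
      intro j hj
      calc (Polynomial.C ((j:ℝ)^2+1) * ∏ i ∈ (Icc 1 n).erase j,
            (Polynomial.X^2 - Polynomial.C ((i:ℝ)^2))).natDegree
          ≤ (∏ i ∈ (Icc 1 n).erase j,
            (Polynomial.X^2 - Polynomial.C ((i:ℝ)^2))).natDegree :=
            Polynomial.natDegree_C_mul_le _ _
        _ = 2*n-2 := hQdeg j hj
    omega
  -- values at integers
  have hs_at : ∀ k ∈ Icc 1 n, s (k:ℝ) =
      ((k:ℝ)^2+1) * ∏ i ∈ (Icc 1 n).erase k, ((k:ℝ)^2 - (i:ℝ)^2) := by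
    intro k hk
    rw [hs]
    apply Finset.sum_eq_single_of_mem k hk
    intro j hj hjk
    apply mul_eq_zero_of_right
    exact Finset.prod_eq_zero (Finset.mem_erase.2 ⟨Ne.symm hjk, hk⟩) (by ring)
  have hsign_k : ∀ k ∈ Icc 1 n, 0 < (-1:ℝ)^(n-k) * s (k:ℝ) := by
    intro k hk
    simp only [Finset.mem_Icc] at hk
    rw [hs_at k (Finset.mem_Icc.2 hk)]
    have h1 := s_sign_lemma n k hk.1 hk.2
    have h2 : (0:ℝ) < (k:ℝ)^2+1 := by positivity
    set Q := ∏ i ∈ (Icc 1 n).erase k, ((k:ℝ)^2 - (i:ℝ)^2) with hQ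
    calc (0:ℝ) < ((k:ℝ)^2+1) * ((-1:ℝ)^(n-k) * Q) := mul_pos h2 h1
      _ = (-1:ℝ)^(n-k) * (((k:ℝ)^2+1) * Q) := by ring
  have hcont : Continuous s := by
    rw [hs_fun]; exact P.continuous
  -- roots in each interval
  have key : ∀ k, k ∈ Icc 1 (n-1) → ∃ y ∈ Set.Ioo (k:ℝ) ((k:ℝ)+1), s y = 0 := by
    intro k hk
    simp only [Finset.mem_Icc] at hk
    have hkn : k ∈ Icc 1 n := Finset.mem_Icc.2 ⟨hk.1, by omega⟩
    have hk1n : k+1 ∈ Icc 1 n := Finset.mem_Icc.2 ⟨by omega, by omega⟩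
    have ha := hsign_k k hkn
    have hb := hsign_k (k+1) hk1n
    have hcast : ((k+1:ℕ):ℝ) = (k:ℝ)+1 := by push_cast; ring
    rw [hcast] at hb
    have he : n - k = (n - (k+1)) + 1 := by omega
    rw [he, pow_succ] at ha
    have hcon : ContinuousOn s (Set.Icc (k:ℝ) ((k:ℝ)+1)) := hcont.continuousOn
    have hle : (k:ℝ) ≤ (k:ℝ)+1 := by linarith
    rcases Nat.even_or_odd (n-(k+1)) with hev | hod
    · rw [hev.neg_one_pow] at ha hb
      have hsk : s (k:ℝ) < 0 := by nlinarith
      have hsk1 : 0 < s ((k:ℝ)+1) := by linarith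
      have := intermediate_value_Ioo hle hcon (Set.mem_Ioo.2 ⟨hsk, hsk1⟩)
      obtain ⟨y, hy, hsy⟩ := this
      exact ⟨y, hy, hsy⟩
    · rw [hod.neg_one_pow] at ha hb
      have hsk : 0 < s (k:ℝ) := by nlinarith
      have hsk1 : s ((k:ℝ)+1) < 0 := by linarith
      have := intermediate_value_Ioo' hle hcon (Set.mem_Ioo.2 ⟨hsk1, hsk⟩)
      obtain ⟨y, hy, hsy⟩ := this
      exact ⟨y, hy, hsy⟩
  -- choose the roots
  set r : ℕ → ℝ := fun k => if h : k ∈ Icc 1 (n-1) then (key k h).choose else 0 with hrdef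
  have hr : ∀ k ∈ Icc 1 (n-1), r k ∈ Set.Ioo (k:ℝ) ((k:ℝ)+1) ∧ s (r k) = 0 := by
    intro k h
    simp only [hrdef, dif_pos h]
    exact ⟨(key k h).choose_spec.1, (key k h).choose_spec.2⟩
  have hrpos : ∀ k ∈ Icc 1 (n-1), 0 < r k := by
    intro k h
    have h1 := (hr k h).1.1
    have : (1:ℝ) ≤ k := by
      simp only [Finset.mem_Icc] at h
      exact_mod_cast h.1
    linarith
  have hrmono : ∀ k ∈ Icc 1 (n-1), ∀ k' ∈ Icc 1 (n-1), k < k' → r k < r k' := by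
    intro k hk k' hk' hlt
    have h1 := (hr k hk).1.2
    have h2 := (hr k' hk').1.1
    have : (k:ℝ)+1 ≤ (k':ℝ) := by exact_mod_cast Nat.succ_le_of_lt hlt
    linarith
  have hrinj : Set.InjOn r (Icc 1 (n-1)) := by
    intro k hk k' hk' heq
    by_contra hne
    rcases Nat.lt_or_ge k k' with h | h
    · exact absurd heq (hrmono k hk k' hk' h).ne
    · exact absurd heq.symm (hrmono k' hk' k hk (by omega)).ne
  have hseven : ∀ y, s (-y) = s y := by
    intro y; rw [hs, hs]; simp [neg_sq]
  set T : Finset ℝ := (Icc 1 (n-1)).image r ∪ (Icc 1 (n-1)).image (fun k => -(r k))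
    with hTdef
  have hTpos : ∀ x ∈ (Icc 1 (n-1)).image r, 0 < x := by
    intro x hx
    obtain ⟨k, hk, rfl⟩ := Finset.mem_image.1 hx
    exact hrpos k hk
  have hTneg : ∀ x ∈ (Icc 1 (n-1)).image (fun k => -(r k)), x < 0 := by
    intro x hx
    obtain ⟨k, hk, rfl⟩ := Finset.mem_image.1 hx
    simpa using hrpos k hk
  have hTcard : T.card = 2*n-2 := by
    rw [hTdef, Finset.card_union_of_disjoint, Finset.card_image_of_injOn hrinj,
      Finset.card_image_of_injOn (fun k hk k' hk' h =>
        hrinj hk hk' (neg_injective h)), Nat.card_Icc]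
    · omega
    · rw [Finset.disjoint_left]
      intro x hx hx'
      exact absurd (hTneg x hx') (not_lt.2 (hTpos x hx).le)
  have hTroot : ∀ x ∈ T, s x = 0 := by
    intro x hx
    rcases Finset.mem_union.1 hx with h | h
    · obtain ⟨k, hk, rfl⟩ := Finset.mem_image.1 h
      exact (hr k hk).2
    · obtain ⟨k, hk, rfl⟩ := Finset.mem_image.1 h
      rw [hseven]
      exact (hr k hk).2
  -- counting
  have hTsub : T ⊆ P.roots.toFinset := by
    intro x hx
    exact Multiset.mem_toFinset.2 ((Polynomial.mem_roots hP0).2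
      (by rw [Polynomial.IsRoot, hPs]; exact hTroot x hx))
  have hcard1 : 2*n-2 ≤ P.roots.toFinset.card := hTcard ▸ Finset.card_le_card hTsub
  have hcard2 : Multiset.card P.roots ≤ 2*n-2 := hdeg ▸ P.card_roots'
  have hcard3 : P.roots.toFinset.card ≤ Multiset.card P.roots :=
    Multiset.toFinset_card_le _
  have hRcard : P.roots.toFinset.card = 2*n-2 := by omega
  have hTeq : T = P.roots.toFinset := Finset.eq_of_subset_of_card_le hTsub (by omega)
  have hnodup : P.roots.Nodup :=
    Multiset.toFinset_card_eq_card_iff_nodup.1 (by omega)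
  have hset : {x : ℝ | s x = 0} = ↑P.roots.toFinset := by
    ext x
    simp [Multiset.mem_toFinset, Polynomial.mem_roots', hP0, Polynomial.IsRoot, hPs]
  -- derivative
  have hP' : P.derivative ≠ 0 := by
    intro h
    have := Polynomial.natDegree_eq_zero_of_derivative_eq_zero h
    omega
  have hderiv : ∀ x, s x = 0 → deriv s x ≠ 0 := by
    intro x hx
    have hroot : P.IsRoot x := by rw [Polynomial.IsRoot, hPs]; exact hx
    have hmem : x ∈ P.roots := (Polynomial.mem_roots hP0).2 hroot
    have hcount : P.roots.count x = 1 := Multiset.count_eq_one_of_mem hnodup hmem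
    have hmul : P.rootMultiplicity x = 1 := by
      rw [← Polynomial.count_roots]; exact hcount
    have hmul' : (P.derivative).rootMultiplicity x = 0 := by
      rw [Polynomial.derivative_rootMultiplicity_of_root hroot, hmul]
    have hnr : ¬ P.derivative.IsRoot x := by
      intro h
      have := (Polynomial.rootMultiplicity_pos hP').2 h
      omega
    rw [hs_fun]
    rw [Polynomial.deriv]
    exact hnr
  -- s 0 ≠ 0
  have hs0 : s 0 ≠ 0 := by
    intro h
    have : (0:ℝ) ∈ T := by
      rw [hTeq, Multiset.mem_toFinset]
      exact (Polynomial.mem_roots hP0).2 (by rw [Polynomial.IsRoot, hPs]; exact h)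
    rcases Finset.mem_union.1 this with h' | h'
    · exact absurd (hTpos 0 h') (lt_irrefl 0)
    · exact absurd (hTneg 0 h') (lt_irrefl 0)
  -- positive roots
  have hposset : {x : ℝ | 0 < x ∧ s x = 0} = ↑((Icc 1 (n-1)).image r) := by
    ext x
    simp only [Set.mem_setOf_eq, Finset.coe_image, Set.mem_image, Finset.mem_coe]
    constructor
    · rintro ⟨hxpos, hxroot⟩
      have hxT : x ∈ T := by
        rw [hTeq, Multiset.mem_toFinset]
        exact (Polynomial.mem_roots hP0).2 (by rw [Polynomial.IsRoot, hPs]; exact hxroot)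
      rcases Finset.mem_union.1 hxT with h' | h'
      · obtain ⟨k, hk, rfl⟩ := Finset.mem_image.1 h'
        exact ⟨k, hk, rfl⟩
      · exact absurd (hTneg x h') (not_lt.2 hxpos.le)
    · rintro ⟨k, hk, rfl⟩
      exact ⟨hrpos k hk, (hr k hk).2⟩
  refine ⟨⟨P, hdeg, hPs⟩, ?_, hderiv, hs0, ?_⟩
  · rw [hset, Set.ncard_coe_finset, hRcard]
  · rw [hposset, Set.ncard_coe_finset, Finset.card_image_of_injOn hrinj, Nat.card_Icc]
    omega
end

section
/- Let s̃(x) = Σ_{j=1}^n (j² + 1) ∏_{i≠j}(x² − i²) with n ≥ 2. Then s̃(n−1) < 0 and s̃(n) > 0; in particular s̃ has a root in the open interval (n−1, n). -/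
open Finset in
theorem s_sign_change_near_n
    (n : ℕ) (hn : 2 ≤ n) (s : ℝ → ℝ)
    (hs : ∀ x, s x = ∑ j ∈ Icc 1 n, ((j : ℝ) ^ 2 + 1) *
      ∏ i ∈ (Icc 1 n).erase j, (x ^ 2 - (i : ℝ) ^ 2)) :
    s ((n : ℝ) - 1) < 0 ∧ 0 < s (n : ℝ) ∧
      ∃ c ∈ Set.Ioo ((n : ℝ) - 1) (n : ℝ), s c = 0 := by
  have h1 : 1 ≤ n := by omega
  have hkcast : ((n - 1 : ℕ) : ℝ) = (n : ℝ) - 1 := by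
    push_cast [Nat.cast_sub h1]; ring
  -- s(n) > 0
  have hsn : 0 < s (n : ℝ) := by
    rw [hs, Finset.sum_eq_single_of_mem n (by simp [Finset.mem_Icc]; omega)]
    · apply mul_pos (by positivity)
      apply Finset.prod_pos
      intro i hi
      rw [Finset.mem_erase, Finset.mem_Icc] at hi
      have h2 : (i : ℝ) < (n : ℝ) := by exact_mod_cast (by omega : i < n)
      have h0 : (0 : ℝ) ≤ (i : ℝ) := by positivity
      nlinarith
    · intro j hj hne
      apply mul_eq_zero_of_right
      apply Finset.prod_eq_zero
        (Finset.mem_erase.mpr ⟨hne.symm, by simp [Finset.mem_Icc]; omega⟩)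
      ring
  -- s(n-1) < 0
  have hsk : s ((n : ℝ) - 1) < 0 := by
    rw [hs, Finset.sum_eq_single_of_mem (n - 1)
      (by simp [Finset.mem_Icc]; omega)]
    · have hmem : n ∈ ((Icc 1 n).erase (n - 1)) :=
        Finset.mem_erase.mpr ⟨by omega, by simp [Finset.mem_Icc]; omega⟩
      rw [← Finset.prod_erase_mul _ _ hmem]
      have hneg : ((n : ℝ) - 1) ^ 2 - (n : ℝ) ^ 2 < 0 := by
        have : (1 : ℝ) ≤ (n : ℝ) := by exact_mod_cast h1
        nlinarith
      have hpos : 0 < ∏ i ∈ (((Icc 1 n).erase (n - 1)).erase n),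
          (((n : ℝ) - 1) ^ 2 - (i : ℝ) ^ 2) := by
        apply Finset.prod_pos
        intro i hi
        rw [Finset.mem_erase, Finset.mem_erase, Finset.mem_Icc] at hi
        have h2 : (i : ℝ) < ((n - 1 : ℕ) : ℝ) := by exact_mod_cast (by omega : i < n - 1)
        rw [hkcast] at h2
        have h0 : (0 : ℝ) ≤ (i : ℝ) := by positivity
        have h3 : (0 : ℝ) ≤ (n : ℝ) - 1 := by
          have : (1 : ℝ) ≤ (n : ℝ) := by exact_mod_cast h1
          linarith
        nlinarith
      have hA : 0 < ((n - 1 : ℕ) : ℝ) ^ 2 + 1 := by positivity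
      exact mul_neg_of_pos_of_neg hA (mul_neg_of_pos_of_neg hpos hneg)
    · intro j hj hne
      apply mul_eq_zero_of_right
      apply Finset.prod_eq_zero
        (Finset.mem_erase.mpr ⟨hne.symm, by simp [Finset.mem_Icc]; omega⟩)
      rw [← hkcast]; ring
  -- continuity
  have hc : Continuous s := by
    have hfun : s = fun x => ∑ j ∈ Icc 1 n, ((j : ℝ) ^ 2 + 1) *
        ∏ i ∈ (Icc 1 n).erase j, (x ^ 2 - (i : ℝ) ^ 2) := funext hs
    rw [hfun]
    apply continuous_finset_sum
    intro j _
    exact continuous_const.mul (continuous_finset_prod _ fun i _ => by fun_prop)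
  refine ⟨hsk, hsn, ?_⟩
  have hle : (n : ℝ) - 1 ≤ (n : ℝ) := by linarith
  have := intermediate_value_Ioo hle hc.continuousOn
  have h0 : (0 : ℝ) ∈ Set.Ioo (s ((n : ℝ) - 1)) (s (n : ℝ)) := ⟨hsk, hsn⟩
  obtain ⟨c, hc1, hc2⟩ := this h0
  exact ⟨c, hc1, hc2⟩
end

section
/- Let f(x,y) = ∏_{k=1}^n (x² + y² − k²)/(x² + y² + 1). Then Hess f(x,y) = 4 s(x,y) t(x,y)/(x² + y² + 1)^{2n+3}, where s(x,y) = Σ_{j=1}^n (j²+1) ∏_{i≠j}(x² + y² − i²) and t(x,y) = (1 − 3x² − 3y²) Σ_{j=1}^n (j²+1) ∏_{i≠j}(x²+y²−i²) + 2(x²+y²) Σ_{j=1}^n (j²+1) Σ_{l≠j} (l²+1) ∏_{k≠j,l}(x²+y²−k²). -/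
open Finset

noncomputable def Pf (s : Finset ℕ) : ℝ → ℝ := fun u => ∏ k ∈ s, (u - (k : ℝ) ^ 2)

noncomputable def Sf (s : Finset ℕ) : ℝ → ℝ :=
  fun u => ∑ j ∈ s, ((j : ℝ) ^ 2 + 1) * Pf (s.erase j) u

noncomputable def Ef (s : Finset ℕ) : ℝ → ℝ :=
  fun u => ∑ j ∈ s, ((j : ℝ) ^ 2 + 1) * ∑ l ∈ s.erase j, Pf ((s.erase j).erase l) u

lemma hasDerivAt_Pf (s : Finset ℕ) (u : ℝ) :
    HasDerivAt (Pf s) (∑ j ∈ s, Pf (s.erase j) u) u := by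
  have h := HasDerivAt.fun_finsetProd (u := s) (f := fun k v => v - (k : ℝ) ^ 2)
    (f' := fun _ => 1) (x := u) (fun i _ => (hasDerivAt_id u).sub_const _)
  simp only [smul_eq_mul, mul_one] at h
  exact h

lemma hasDerivAt_Sf (s : Finset ℕ) (u : ℝ) :
    HasDerivAt (Sf s) (Ef s u) u := by
  apply HasDerivAt.fun_sum
  intro j _
  exact (hasDerivAt_Pf _ u).const_mul _

lemma identA (s : Finset ℕ) (u : ℝ) :
    Sf s u = (u + 1) * (∑ j ∈ s, Pf (s.erase j) u) - s.card * Pf s u := by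
  have hc : (s.card : ℝ) * Pf s u = ∑ _j ∈ s, Pf s u := by
    simp [Finset.sum_const, nsmul_eq_mul]
  rw [Finset.mul_sum, hc, ← Finset.sum_sub_distrib, Sf]
  refine Finset.sum_congr rfl fun j hj => ?_
  have h := Finset.mul_prod_erase s (fun k => u - (k : ℝ) ^ 2) hj
  simp only [Pf, ← h]
  ring

lemma identB (s : Finset ℕ) (u : ℝ) :
    ∑ j ∈ s, ((j : ℝ) ^ 2 + 1) *
        ∑ l ∈ s.erase j, ((l : ℝ) ^ 2 + 1) * Pf ((s.erase j).erase l) u =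
      (u + 1) * Ef s u - ((s.card : ℝ) - 1) * Sf s u := by
  rw [Ef, Finset.mul_sum, Sf, Finset.mul_sum, ← Finset.sum_sub_distrib]
  refine Finset.sum_congr rfl fun j hj => ?_
  have h := identA (s.erase j) u
  have hcard : (((s.erase j).card : ℝ)) = (s.card : ℝ) - 1 := by
    rw [Finset.card_erase_of_mem hj]
    have : 1 ≤ s.card := Finset.card_pos.mpr ⟨j, hj⟩
    push_cast [this]
    ring
  rw [show ∑ l ∈ s.erase j, ((l : ℝ) ^ 2 + 1) * Pf ((s.erase j).erase l) u
      = Sf (s.erase j) u from rfl, h, hcard]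
  ring

noncomputable def gP (n : ℕ) : ℝ → ℝ := fun u => Pf (Icc 1 n) u / (u + 1) ^ n
noncomputable def g1 (n : ℕ) : ℝ → ℝ := fun u => Sf (Icc 1 n) u / (u + 1) ^ (n + 1)
noncomputable def g2 (n : ℕ) : ℝ → ℝ := fun u =>
  ((u + 1) * Ef (Icc 1 n) u - ((n : ℝ) + 1) * Sf (Icc 1 n) u) / (u + 1) ^ (n + 2)

lemma hasDerivAt_gP (n : ℕ) (hn : 1 ≤ n) (u : ℝ) (hu : u + 1 ≠ 0) :
    HasDerivAt (gP n) (g1 n u) u := by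
  obtain ⟨m, rfl⟩ : ∃ m, n = m + 1 := ⟨n - 1, (Nat.succ_pred_eq_of_pos hn).symm⟩
  have hden : HasDerivAt (fun u : ℝ => (u + 1) ^ (m + 1))
      ((((m : ℝ)) + 1) * (u + 1) ^ m * 1) u := by
    have := ((hasDerivAt_id u).add_const (1 : ℝ)).fun_pow (m + 1)
    simpa using this
  have h := (hasDerivAt_Pf (Icc 1 (m + 1)) u).fun_div hden (pow_ne_zero _ hu)
  refine h.congr_deriv ?_
  rw [g1, identA]
  rw [Nat.card_Icc]
  push_cast
  field_simp
  ring

lemma hasDerivAt_g1 (n : ℕ) (u : ℝ) (hu : u + 1 ≠ 0) :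
    HasDerivAt (g1 n) (g2 n u) u := by
  have hden : HasDerivAt (fun u : ℝ => (u + 1) ^ (n + 1))
      ((((n : ℝ)) + 1) * (u + 1) ^ n * 1) u := by
    have := ((hasDerivAt_id u).add_const (1 : ℝ)).fun_pow (n + 1)
    simpa using this
  have h := (hasDerivAt_Sf (Icc 1 n) u).fun_div hden (pow_ne_zero _ hu)
  refine h.congr_deriv ?_
  rw [g2]
  field_simp
  ring

open Finset in
theorem hessian_rational_product_circles_odd
    (n : ℕ) (hn : 1 ≤ n) (f : ℝ → ℝ → ℝ)
    (hf : ∀ x y, f x y = ∏ k ∈ Icc 1 n,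
      ((x ^ 2 + y ^ 2 - (k : ℝ) ^ 2) / (x ^ 2 + y ^ 2 + 1))) :
    ∀ x y, Hess f x y =
      4 * (∑ j ∈ Icc 1 n, ((j : ℝ) ^ 2 + 1) *
            ∏ i ∈ (Icc 1 n).erase j, (x ^ 2 + y ^ 2 - (i : ℝ) ^ 2)) *
        ((1 - 3 * x ^ 2 - 3 * y ^ 2) *
            (∑ j ∈ Icc 1 n, ((j : ℝ) ^ 2 + 1) *
              ∏ i ∈ (Icc 1 n).erase j, (x ^ 2 + y ^ 2 - (i : ℝ) ^ 2)) +
          2 * (x ^ 2 + y ^ 2) *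
            ∑ j ∈ Icc 1 n, ((j : ℝ) ^ 2 + 1) *
              ∑ l ∈ (Icc 1 n).erase j, ((l : ℝ) ^ 2 + 1) *
                ∏ k ∈ ((Icc 1 n).erase j).erase l,
                  (x ^ 2 + y ^ 2 - (k : ℝ) ^ 2)) /
        (x ^ 2 + y ^ 2 + 1) ^ (2 * n + 3) := by
  have key : ∀ a b : ℝ, a ^ 2 + b ^ 2 + 1 ≠ 0 := fun a b => by positivity
  have hfg : ∀ a b : ℝ, f a b = gP n (a ^ 2 + b ^ 2) := by
    intro a b
    rw [hf, gP, Pf, Finset.prod_div_distrib]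
    congr 1
    rw [Finset.prod_const, Nat.card_Icc]
    simp
  have hsq : ∀ (a c : ℝ), HasDerivAt (fun s : ℝ => s ^ 2 + c) (2 * a) a := by
    intro a c
    simpa using (hasDerivAt_pow 2 a).add_const c
  have dxf : ∀ a b : ℝ, HasDerivAt (fun s => f s b) (g1 n (a ^ 2 + b ^ 2) * (2 * a)) a := by
    intro a b
    have h := HasDerivAt.comp (h₂ := gP n) (h := fun s : ℝ => s ^ 2 + b ^ 2) a
      (hasDerivAt_gP n hn (a ^ 2 + b ^ 2) (key a b)) (hsq a (b ^ 2))
    have he : (fun s => f s b) = fun s => gP n (s ^ 2 + b ^ 2) := funext fun s => hfg s b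
    rw [he]
    exact h
  have dyf : ∀ a b : ℝ, HasDerivAt (fun s => f a s) (g1 n (a ^ 2 + b ^ 2) * (2 * b)) b := by
    intro a b
    have h := HasDerivAt.comp (h₂ := gP n) (h := fun s : ℝ => s ^ 2 + a ^ 2) b
      (by simpa [add_comm] using hasDerivAt_gP n hn (a ^ 2 + b ^ 2) (key a b)) (hsq b (a ^ 2))
    have he : (fun s => f a s) = fun s => gP n (s ^ 2 + a ^ 2) := by
      funext s; rw [hfg a s]; ring_nf
    rw [he]
    simpa [add_comm, Function.comp_def] using h
  intro x y
  have dg1x : ∀ b : ℝ, HasDerivAt (fun t : ℝ => g1 n (t ^ 2 + b ^ 2))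
      (g2 n (x ^ 2 + b ^ 2) * (2 * x)) x :=
    fun b => HasDerivAt.comp (h₂ := g1 n) (h := fun s : ℝ => s ^ 2 + b ^ 2) x
      (hasDerivAt_g1 n (x ^ 2 + b ^ 2) (key x b)) (hsq x (b ^ 2))
  have dg1y : HasDerivAt (fun t : ℝ => g1 n (x ^ 2 + t ^ 2))
      (g2 n (x ^ 2 + y ^ 2) * (2 * y)) y := by
    have h := HasDerivAt.comp (h₂ := g1 n) (h := fun s : ℝ => s ^ 2 + x ^ 2) y
      (by simpa [add_comm] using hasDerivAt_g1 n (x ^ 2 + y ^ 2) (key x y)) (hsq y (x ^ 2))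
    have : (fun t : ℝ => g1 n (x ^ 2 + t ^ 2)) = fun t : ℝ => g1 n (t ^ 2 + x ^ 2) := by
      funext t; ring_nf
    rw [this]
    simpa [add_comm, Function.comp_def] using h
  have fxx : deriv (fun t => deriv (fun s => f s y) t) x =
      g2 n (x ^ 2 + y ^ 2) * (2 * x) * (2 * x) + g1 n (x ^ 2 + y ^ 2) * 2 := by
    have he : (fun t => deriv (fun s => f s y) t) = fun t => g1 n (t ^ 2 + y ^ 2) * (2 * t) :=
      funext fun t => (dxf t y).deriv
    rw [he]
    simpa using ((dg1x y).fun_mul ((hasDerivAt_id x).const_mul 2)).deriv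
  have fyy : deriv (fun t => deriv (fun s => f x s) t) y =
      g2 n (x ^ 2 + y ^ 2) * (2 * y) * (2 * y) + g1 n (x ^ 2 + y ^ 2) * 2 := by
    have he : (fun t => deriv (fun s => f x s) t) = fun t => g1 n (x ^ 2 + t ^ 2) * (2 * t) :=
      funext fun t => (dyf x t).deriv
    rw [he]
    simpa using (dg1y.fun_mul ((hasDerivAt_id y).const_mul 2)).deriv
  have fxy : deriv (fun t => deriv (fun s => f s t) x) y =
      g2 n (x ^ 2 + y ^ 2) * (2 * y) * (2 * x) := by
    have he : (fun t => deriv (fun s => f s t) x) = fun t => g1 n (x ^ 2 + t ^ 2) * (2 * x) :=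
      funext fun t => (dxf x t).deriv
    rw [he]
    exact (dg1y.mul_const (2 * x)).deriv
  rw [Hess, fxx, fyy, fxy]
  have eT := identB (Icc 1 n) (x ^ 2 + y ^ 2)
  rw [Nat.card_Icc] at eT
  simp only [Nat.add_sub_cancel] at eT
  have eS : (∑ j ∈ Icc 1 n, ((j : ℝ) ^ 2 + 1) *
      ∏ i ∈ (Icc 1 n).erase j, (x ^ 2 + y ^ 2 - (i : ℝ) ^ 2)) = Sf (Icc 1 n) (x ^ 2 + y ^ 2) :=
    rfl
  have eT' : (∑ j ∈ Icc 1 n, ((j : ℝ) ^ 2 + 1) *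
      ∑ l ∈ (Icc 1 n).erase j, ((l : ℝ) ^ 2 + 1) *
        ∏ k ∈ ((Icc 1 n).erase j).erase l, (x ^ 2 + y ^ 2 - (k : ℝ) ^ 2)) =
      (x ^ 2 + y ^ 2 + 1) * Ef (Icc 1 n) (x ^ 2 + y ^ 2) -
        ((n : ℝ) - 1) * Sf (Icc 1 n) (x ^ 2 + y ^ 2) := eT
  rw [eS, eT']
  rw [g1, g2]
  have hu := key x y
  obtain ⟨m, rfl⟩ : ∃ m, n = m + 1 := ⟨n - 1, (Nat.succ_pred_eq_of_pos hn).symm⟩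
  push_cast
  field_simp
  ring
end

section
/- Let a ≠ b be real numbers, a_m < ⋯ < a_1 < 0 < b_1 < ⋯ < b_n, and f(x,y) = (y − ax)(y − bx) ∏_{i=1}^m (x − a_i) ∏_{j=1}^n (x − b_j). Then the restriction of Hess f to the line x = a_k (for 1 ≤ k ≤ m) is Hess f(a_k, y) = −(2y − (a+b)a_k)² C_k², where C_k = ∏_{j=1}^n (a_k − b_j) · Σ_{l=1}^m ∏_{s≠l}(a_k − a_s). In particular Hess f(a_k, y) ≤ 0 with equality iff y = (a+b)a_k/2, provided C_k ≠ 0. -/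
open Finset in
theorem hessian_restricted_to_vertical_lines
    (m n : ℕ) (a b : ℝ) (hab : a ≠ b)
    (A B : ℕ → ℝ)
    (hA : ∀ i j, 1 ≤ i → i < j → j ≤ m → A j < A i) (hA1 : A 1 < 0)
    (hB : ∀ i j, 1 ≤ i → i < j → j ≤ n → B i < B j) (hB1 : 0 < B 1)
    (f : ℝ → ℝ → ℝ)
    (hf : ∀ x y, f x y = (y - a * x) * (y - b * x) *
      (∏ i ∈ Icc 1 m, (x - A i)) * ∏ j ∈ Icc 1 n, (x - B j)) :
    ∀ k, 1 ≤ k → k ≤ m →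
      (∀ y, Hess f (A k) y = -(2 * y - (a + b) * A k) ^ 2 *
        ((∏ j ∈ Icc 1 n, (A k - B j)) *
          ∑ l ∈ Icc 1 m, ∏ s ∈ (Icc 1 m).erase l, (A k - A s)) ^ 2) ∧
      (((∏ j ∈ Icc 1 n, (A k - B j)) *
          ∑ l ∈ Icc 1 m, ∏ s ∈ (Icc 1 m).erase l, (A k - A s)) ≠ 0 →
        ∀ y, Hess f (A k) y ≤ 0 ∧
          (Hess f (A k) y = 0 ↔ y = (a + b) * A k / 2)) := by
  intro k hk1 hkm
  set x0 := A k with hx0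
  have hkmem : k ∈ Icc 1 m := mem_Icc.mpr ⟨hk1, hkm⟩
  have hP1 : (∏ i ∈ Icc 1 m, (x0 - A i)) = 0 :=
    prod_eq_zero hkmem (by simp [hx0])
  set P2 : ℝ := ∏ j ∈ Icc 1 n, (x0 - B j) with hP2
  set D1 : ℝ := ∑ l ∈ Icc 1 m, ∏ s ∈ (Icc 1 m).erase l, (x0 - A s) with hD1
  -- f x0 s = 0 for all s
  have hfx0 : ∀ s : ℝ, f x0 s = 0 := by
    intro s; rw [hf]; rw [hP1]; ring
  -- derivative in x at x0 for fixed t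
  have hderiv1 : ∀ t : ℝ, deriv (fun s => f s t) x0
      = (t - a * x0) * (t - b * x0) * D1 * P2 := by
    intro t
    have h1 : HasDerivAt (fun s : ℝ => t - a * s) (-a) x0 := by
      simpa using ((hasDerivAt_id x0).const_mul a).const_sub t
    have h2 : HasDerivAt (fun s : ℝ => t - b * s) (-b) x0 := by
      simpa using ((hasDerivAt_id x0).const_mul b).const_sub t
    have hp1 : HasDerivAt (fun s : ℝ => ∏ i ∈ Icc 1 m, (s - A i)) D1 x0 := by
      have := HasDerivAt.fun_finsetProd (u := Icc 1 m) (f := fun i (s : ℝ) => s - A i)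
        (f' := fun _ => (1 : ℝ)) (x := x0)
        (fun i _ => (hasDerivAt_id x0).sub_const (A i))
      simpa [hD1] using this
    have hp2 : HasDerivAt (fun s : ℝ => ∏ j ∈ Icc 1 n, (s - B j))
        (∑ l ∈ Icc 1 n, ∏ s ∈ (Icc 1 n).erase l, (x0 - B s)) x0 := by
      have := HasDerivAt.fun_finsetProd (u := Icc 1 n) (f := fun j (s : ℝ) => s - B j)
        (f' := fun _ => (1 : ℝ)) (x := x0)
        (fun j _ => (hasDerivAt_id x0).sub_const (B j))
      simpa using this
    have hful : HasDerivAt (fun s => f s t)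
        ((((-a) * (t - b * x0) + (t - a * x0) * (-b)) * (∏ i ∈ Icc 1 m, (x0 - A i))
          + (t - a * x0) * (t - b * x0) * D1) * P2
          + (t - a * x0) * (t - b * x0) * (∏ i ∈ Icc 1 m, (x0 - A i)) *
            (∑ l ∈ Icc 1 n, ∏ s ∈ (Icc 1 n).erase l, (x0 - B s))) x0 := by
      have := ((h1.mul h2).mul hp1).mul hp2
      rw [show (fun s => f s t) = _ from funext fun s => hf s t]
      exact this
    rw [hP1] at hful
    have := hful.deriv
    rw [this]; ring
  -- middle term is zero
  have hzero : (fun s => f x0 s) = fun _ : ℝ => (0 : ℝ) := funext hfx0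
  have hmid : ∀ y : ℝ, deriv (fun t => deriv (fun s => f x0 s) t) y = 0 := by
    intro y
    have : (fun t => deriv (fun s => f x0 s) t) = fun _ : ℝ => (0 : ℝ) := by
      funext t; rw [hzero]; simp
    rw [this]; simp
  -- mixed term
  have hmix : ∀ y : ℝ, deriv (fun t => deriv (fun s => f s t) x0) y
      = (2 * y - (a + b) * x0) * (D1 * P2) := by
    intro y
    have he : (fun t => deriv (fun s => f s t) x0)
        = fun t => (t - a * x0) * (t - b * x0) * D1 * P2 := funext hderiv1
    rw [he]
    have h : HasDerivAt (fun t : ℝ => (t - a * x0) * (t - b * x0) * D1 * P2)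
        (((1 * (y - b * x0) + (y - a * x0) * 1) * D1) * P2) y :=
      ((((hasDerivAt_id y).sub_const (a * x0)).mul
        ((hasDerivAt_id y).sub_const (b * x0))).mul_const D1).mul_const P2
    rw [h.deriv]; ring
  have hH : ∀ y : ℝ, Hess f x0 y
      = -(2 * y - (a + b) * x0) ^ 2 * (P2 * D1) ^ 2 := by
    intro y
    rw [Hess, hmid y, hmix y]; ring
  refine ⟨hH, ?_⟩
  intro hC y
  rw [hH y]
  constructor
  · nlinarith [sq_nonneg (2 * y - (a + b) * x0), sq_nonneg (P2 * D1)]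
  · constructor
    · intro h
      have h2 : (2 * y - (a + b) * x0) ^ 2 = 0 := by
        have hC2 : (P2 * D1) ^ 2 > 0 := by positivity
        nlinarith
      have := pow_eq_zero_iff (n := 2) (by norm_num) |>.mp h2
      linarith
    · intro h; rw [h]; ring
end

section
/- With f as above, the restriction of Hess f to the line y = ax satisfies Hess f(x, ax) = −(a − b)² (g′(x))², where g(x) = x ∏_{i=1}^m (x − a_i) ∏_{j=1}^n (x − b_j). In particular Hess f(x, ax) ≤ 0 for all x, with equality exactly at the m+n critical points of g. -/
open Polynomial in
lemma hess_line_aux (a b : ℝ) (p : Polynomial ℝ) (f : ℝ → ℝ → ℝ)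
    (hf : ∀ x y, f x y = (y - a * x) * (y - b * x) * p.eval x) (x : ℝ) :
    Hess f x (a * x) =
      -(a - b) ^ 2 * (p.eval x + x * p.derivative.eval x) ^ 2 := by
  have hD1 : ∀ y t, deriv (fun s => f s y) t =
      (-a * (y - b * t) + (y - a * t) * -b) * p.eval t +
        (y - a * t) * (y - b * t) * p.derivative.eval t := by
    intro y t
    have h1 : HasDerivAt (fun s : ℝ => y - a * s) (-a) t := by
      simpa using ((hasDerivAt_id t).const_mul a).const_sub y
    have h2 : HasDerivAt (fun s : ℝ => y - b * s) (-b) t := by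
      simpa using ((hasDerivAt_id t).const_mul b).const_sub y
    have h3 := (h1.mul h2).mul (p.hasDerivAt t)
    simp only [hf]
    exact h3.deriv
  have ha : HasDerivAt (fun t : ℝ => a * x - a * t) (-a) x := by
    simpa using ((hasDerivAt_id x).const_mul a).const_sub (a * x)
  have hb : HasDerivAt (fun t : ℝ => a * x - b * t) (-b) x := by
    simpa using ((hasDerivAt_id x).const_mul b).const_sub (a * x)
  have hfxx : deriv (fun t => deriv (fun s => f s (a * x)) t) x =
      (-a * -b + -a * -b) * p.eval x +
        (-a * (a * x - b * x) + (a * x - a * x) * -b) * p.derivative.eval x +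
        ((-a * (a * x - b * x) + (a * x - a * x) * -b) * p.derivative.eval x +
          (a * x - a * x) * (a * x - b * x) * p.derivative.derivative.eval x) := by
    simp only [hD1]
    have hu := (hb.const_mul (-a)).add (ha.mul_const (-b))
    have t1 := hu.mul (p.hasDerivAt x)
    have t2 := (ha.mul hb).mul (p.derivative.hasDerivAt x)
    exact (t1.add t2).deriv
  have hyy1 : ∀ t : ℝ, deriv (fun s => f x s) t =
      (1 * (t - b * x) + (t - a * x) * 1) * p.eval x := by
    intro t
    have h1 : HasDerivAt (fun s : ℝ => s - a * x) 1 t := (hasDerivAt_id t).sub_const _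
    have h2 : HasDerivAt (fun s : ℝ => s - b * x) 1 t := (hasDerivAt_id t).sub_const _
    have h3 := (h1.mul h2).mul_const (p.eval x)
    simp only [hf]
    exact h3.deriv
  have hfyy : deriv (fun t => deriv (fun s => f x s) t) (a * x) =
      (1 * 1 + 1 * 1) * p.eval x := by
    simp only [hyy1]
    have h1 : HasDerivAt (fun t : ℝ => t - a * x) 1 (a * x) := (hasDerivAt_id _).sub_const _
    have h2 : HasDerivAt (fun t : ℝ => t - b * x) 1 (a * x) := (hasDerivAt_id _).sub_const _
    have h3 := ((h2.const_mul 1).add (h1.mul_const 1)).mul_const (p.eval x)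
    simp only [one_mul, mul_one] at h3 ⊢
    exact h3.deriv
  have hfxy : deriv (fun t => deriv (fun s => f s t) x) (a * x) =
      (-a * 1 + 1 * -b) * p.eval x +
        (1 * (a * x - b * x) + (a * x - a * x) * 1) * p.derivative.eval x := by
    simp only [hD1]
    have h1 : HasDerivAt (fun t : ℝ => t - a * x) 1 (a * x) := (hasDerivAt_id _).sub_const _
    have h2 : HasDerivAt (fun t : ℝ => t - b * x) 1 (a * x) := (hasDerivAt_id _).sub_const _
    have part1 := ((h2.const_mul (-a)).add (h1.mul_const (-b))).mul_const (p.eval x)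
    have part2 := (h1.mul h2).mul_const (p.derivative.eval x)
    exact (part1.add part2).deriv
  rw [Hess, hfxx, hfyy, hfxy]
  ring

open Finset in
theorem hessian_restricted_to_line_y_eq_ax
    (m n : ℕ) (a b : ℝ) (hab : a ≠ b)
    (A B : ℕ → ℝ)
    (hA : ∀ i j, 1 ≤ i → i < j → j ≤ m → A j < A i) (hA1 : A 1 < 0)
    (hB : ∀ i j, 1 ≤ i → i < j → j ≤ n → B i < B j) (hB1 : 0 < B 1)
    (f : ℝ → ℝ → ℝ)
    (hf : ∀ x y, f x y = (y - a * x) * (y - b * x) *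
      (∏ i ∈ Icc 1 m, (x - A i)) * ∏ j ∈ Icc 1 n, (x - B j))
    (g : ℝ → ℝ)
    (hg : ∀ x, g x = x * (∏ i ∈ Icc 1 m, (x - A i)) * ∏ j ∈ Icc 1 n, (x - B j)) :
    (∀ x, Hess f x (a * x) = -(a - b) ^ 2 * (deriv g x) ^ 2) ∧
    (∀ x, Hess f x (a * x) ≤ 0 ∧ (Hess f x (a * x) = 0 ↔ deriv g x = 0)) ∧
    {x : ℝ | deriv g x = 0}.ncard = m + n := by
  classical
  -- the polynomial q whose eval is the product part, and G the polynomial of g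
  set q : Polynomial ℝ :=
    (∏ i ∈ Icc 1 m, (Polynomial.X - Polynomial.C (A i))) *
      ∏ j ∈ Icc 1 n, (Polynomial.X - Polynomial.C (B j)) with hq_def
  set G : Polynomial ℝ := Polynomial.X * q with hG_def
  have hqeval : ∀ x : ℝ, q.eval x =
      (∏ i ∈ Icc 1 m, (x - A i)) * ∏ j ∈ Icc 1 n, (x - B j) := by
    intro x
    simp [hq_def, Polynomial.eval_prod]
  have hgG : g = fun x => G.eval x := by
    funext x
    rw [hg, hG_def]
    simp only [Polynomial.eval_mul, Polynomial.eval_X, hqeval]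
    ring
  have hdg : ∀ x, deriv g x = G.derivative.eval x := by
    intro x
    rw [hgG]
    exact (G.hasDerivAt x).deriv
  have hdgq : ∀ x, deriv g x = q.eval x + x * q.derivative.eval x := by
    intro x
    rw [hdg, hG_def]
    simp only [Polynomial.derivative_mul, Polynomial.derivative_X, Polynomial.eval_add,
      Polynomial.eval_mul, Polynomial.eval_one, Polynomial.eval_X]
    ring
  -- Part 1: the Hessian identity
  have hf' : ∀ x y, f x y = (y - a * x) * (y - b * x) * q.eval x := by
    intro x y
    rw [hf, hqeval]
    ring
  have part1 : ∀ x, Hess f x (a * x) = -(a - b) ^ 2 * (deriv g x) ^ 2 := by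
    intro x
    rw [hess_line_aux a b q f hf' x, hdgq]
  -- Part 2
  have part2 : ∀ x, Hess f x (a * x) ≤ 0 ∧ (Hess f x (a * x) = 0 ↔ deriv g x = 0) := by
    intro x
    rw [part1 x]
    constructor
    · have h1 : (0:ℝ) ≤ (a - b) ^ 2 * (deriv g x) ^ 2 :=
        mul_nonneg (sq_nonneg _) (sq_nonneg _)
      nlinarith
    · constructor
      · intro h
        have h2 : (a - b) ^ 2 * (deriv g x) ^ 2 = 0 := by linarith
        rcases mul_eq_zero.mp h2 with h' | h'
        · exact absurd h' (pow_ne_zero _ (sub_ne_zero.mpr hab))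
        · exact pow_eq_zero_iff two_ne_zero |>.mp h'
      · intro h; rw [h]; ring
  refine ⟨part1, part2, ?_⟩
  -- Part 3: counting critical points of g
  -- degree facts
  have hmonA : (∏ i ∈ Icc 1 m, (Polynomial.X - Polynomial.C (A i))).Monic :=
    Polynomial.monic_prod_of_monic _ _ fun i _ => Polynomial.monic_X_sub_C _
  have hmonB : (∏ j ∈ Icc 1 n, (Polynomial.X - Polynomial.C (B j))).Monic :=
    Polynomial.monic_prod_of_monic _ _ fun j _ => Polynomial.monic_X_sub_C _
  have hmonq : q.Monic := hmonA.mul hmonB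
  have hdegA : (∏ i ∈ Icc 1 m, (Polynomial.X - Polynomial.C (A i))).natDegree = m := by
    rw [Polynomial.natDegree_prod_of_monic _ _ fun i _ => Polynomial.monic_X_sub_C _]
    simp [Polynomial.natDegree_X_sub_C]
  have hdegB : (∏ j ∈ Icc 1 n, (Polynomial.X - Polynomial.C (B j))).natDegree = n := by
    rw [Polynomial.natDegree_prod_of_monic _ _ fun j _ => Polynomial.monic_X_sub_C _]
    simp [Polynomial.natDegree_X_sub_C]
  have hdegG : G.natDegree = m + n + 1 := by
    rw [hG_def, Polynomial.Monic.natDegree_mul Polynomial.monic_X hmonq,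
      Polynomial.natDegree_X, hq_def, Polynomial.Monic.natDegree_mul hmonA hmonB,
      hdegA, hdegB]
    omega
  have hG'ne : G.derivative ≠ 0 := by
    intro h
    have := Polynomial.natDegree_eq_zero_of_derivative_eq_zero h
    omega
  have hdegG' : G.derivative.natDegree ≤ m + n := by
    have := Polynomial.natDegree_derivative_le G
    omega
  set S : Set ℝ := {x : ℝ | deriv g x = 0} with hS_def
  have hSroot : S = {x : ℝ | G.derivative.IsRoot x} := by
    ext x
    simp [hS_def, hdg, Polynomial.IsRoot]
  have hSfin : S.Finite := by
    rw [hSroot]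
    exact Polynomial.finite_setOf_isRoot hG'ne
  -- upper bound
  have hupper : S.ncard ≤ m + n := by
    have hsub : hSfin.toFinset.val ⊆ (Polynomial.derivative G).roots := by
      intro z hz
      rw [Finset.mem_val, Set.Finite.mem_toFinset] at hz
      rw [hSroot] at hz
      exact (Polynomial.mem_roots hG'ne).mpr hz
    calc S.ncard = hSfin.toFinset.card := Set.ncard_eq_toFinset_card S hSfin
      _ ≤ (Polynomial.derivative G).natDegree :=
          Polynomial.card_le_degree_of_subset_roots hsub
      _ ≤ m + n := hdegG'
  -- the interlacing roots of g
  set r : ℕ → ℝ := fun k => if k < m then A (m - k) else if k = m then 0 else B (k - m)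
    with hr_def
  have hrlt : ∀ k, k < m → r k = A (m - k) := by intro k h; simp [hr_def, h]
  have hrm : r m = 0 := by simp [hr_def]
  have hrgt : ∀ k, m < k → r k = B (k - m) := by
    intro k h
    simp only [hr_def]
    rw [if_neg (by omega : ¬ k < m), if_neg (by omega : ¬ k = m)]
  have hgr : ∀ k, k ≤ m + n → g (r k) = 0 := by
    intro k hk
    rcases lt_trichotomy k m with h | h | h
    · rw [hrlt k h, hg]
      have hz : (∏ i ∈ Icc 1 m, (A (m - k) - A i)) = 0 :=
        Finset.prod_eq_zero (Finset.mem_Icc.mpr ⟨by omega, by omega⟩) (sub_self _)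
      rw [hz]; ring
    · subst h; rw [hrm, hg]; ring
    · rw [hrgt k h, hg]
      have hz : (∏ j ∈ Icc 1 n, (B (k - m) - B j)) = 0 :=
        Finset.prod_eq_zero (Finset.mem_Icc.mpr ⟨by omega, by omega⟩) (sub_self _)
      rw [hz]; ring
  have hstep : ∀ k, k + 1 ≤ m + n → r k < r (k + 1) := by
    intro k hk
    by_cases h1 : k + 1 < m
    · rw [hrlt k (by omega), hrlt (k + 1) h1]
      exact hA (m - (k + 1)) (m - k) (by omega) (by omega) (by omega)
    · by_cases h2 : k + 1 = m
      · have hkm : k < m := by omega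
        have hr1 : r (k + 1) = 0 := by rw [h2]; exact hrm
        rw [hrlt k hkm, (by omega : m - k = 1), hr1]
        exact hA1
      · by_cases h3 : k = m
        · have hr0 : r k = 0 := by rw [h3]; exact hrm
          rw [hr0, hrgt (k + 1) (by omega), (by omega : k + 1 - m = 1)]
          exact hB1
        · have hmk : m < k := by omega
          rw [hrgt k hmk, hrgt (k + 1) (by omega)]
          exact hB (k - m) (k + 1 - m) (by omega) (by omega) (by omega)
  have hmono : ∀ i j, i < j → j ≤ m + n → r i < r j := by
    intro i j hij hj
    induction j with
    | zero => omega
    | succ j ih =>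
      rcases Nat.lt_or_ge i j with h | h
      · exact (ih h (by omega)).trans (hstep j hj)
      · have : i = j := by omega
        subst this
        exact hstep i hj
  have hgc : Continuous g := by rw [hgG]; exact G.continuous
  have hc : ∀ k, k < m + n → ∃ c ∈ Set.Ioo (r k) (r (k + 1)), deriv g c = 0 := by
    intro k hk
    exact exists_deriv_eq_zero (hstep k (by omega)) hgc.continuousOn
      ((hgr k (by omega)).trans (hgr (k + 1) (by omega)).symm)
  set c : ℕ → ℝ := fun k => if h : k < m + n then (hc k h).choose else 0 with hc_def
  have hcspec : ∀ k (h : k < m + n),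
      c k ∈ Set.Ioo (r k) (r (k + 1)) ∧ deriv g (c k) = 0 := by
    intro k h
    have := (hc k h).choose_spec
    simp only [hc_def, dif_pos h]
    exact this
  have hcmono : ∀ i j, i < j → j < m + n → c i < c j := by
    intro i j hij hj
    have h1 := (hcspec i (by omega)).1
    have h2 := (hcspec j hj).1
    have h3 : r (i + 1) ≤ r j := by
      rcases Nat.lt_or_ge (i + 1) j with h | h
      · exact (hmono (i + 1) j h (by omega)).le
      · have : i + 1 = j := by omega
        exact this ▸ le_refl _
    exact h1.2.trans_le (h3.trans h2.1.le)
  set T : Finset ℝ := (Finset.range (m + n)).image c with hT_def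
  have hTcard : T.card = m + n := by
    rw [hT_def, Finset.card_image_of_injOn, Finset.card_range]
    intro i hi j hj hij
    simp only [Finset.coe_range, Set.mem_Iio] at hi hj
    by_contra hne
    rcases Nat.lt_or_ge i j with h | h
    · exact absurd hij (hcmono i j h hj).ne
    · exact absurd hij.symm (hcmono j i (by omega) hi).ne
  have hTS : ↑T ⊆ S := by
    intro z hz
    simp only [hT_def, Finset.coe_image, Finset.coe_range, Set.mem_image,
      Set.mem_Iio] at hz
    obtain ⟨k, hk, rfl⟩ := hz
    exact (hcspec k hk).2
  have hlower : m + n ≤ S.ncard := by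
    have := Set.ncard_le_ncard hTS hSfin
    rwa [Set.ncard_coe_finset, hTcard] at this
  exact le_antisymm hupper hlower
end

section
/- Let f̃(x) = ∏_{k=1}^n (x² − k²)/(x² + 1) with n ≥ 2, and let x₀ be a critical point of f̃ in the interval (n−1, n). Then x₀ is a local minimum of f̃ and f̃″(x₀) > 0. -/
open Filter

private lemma cplim_key_ineq (x k : ℝ) (hx1 : 1 ≤ x) (hk0 : 0 ≤ k) (hkx : k < x + 1) :
    0 < 3*x^4 + (1 - k^2)*x^2 + k^2 := by
  have h1 : k^2 * (x^2 - 1) ≤ (x+1)^2 * (x^2 - 1) := by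
    apply mul_le_mul_of_nonneg_right (by nlinarith) (by nlinarith)
  nlinarith [mul_nonneg (mul_nonneg (mul_nonneg (by linarith : (0:ℝ) ≤ x) (by linarith : (0:ℝ) ≤ x)) (by linarith : (0:ℝ) ≤ x)) (by linarith : (0:ℝ) ≤ x - 1)]

private lemma cplim_gderiv (k : ℕ) (x : ℝ) :
    HasDerivAt (fun x : ℝ => (x ^ 2 - (k : ℝ) ^ 2) / (x ^ 2 + 1))
      (2*x*((k:ℝ)^2+1)/((x^2+1)^2)) x := by
  have hden : (0:ℝ) < x^2 + 1 := by positivity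
  have h := (((hasDerivAt_pow 2 x).sub_const ((k:ℝ)^2)).div
      ((hasDerivAt_pow 2 x).add_const 1) (ne_of_gt hden))
  refine h.congr_deriv ?_
  norm_num only
  ring

open Finset in
theorem critical_point_in_last_interval_is_min
    (n : ℕ) (hn : 2 ≤ n) (f : ℝ → ℝ)
    (hf : ∀ x, f x = ∏ k ∈ Icc 1 n, ((x ^ 2 - (k : ℝ) ^ 2) / (x ^ 2 + 1)))
    (x₀ : ℝ) (hx₀ : x₀ ∈ Set.Ioo ((n : ℝ) - 1) (n : ℝ))
    (hcrit : deriv f x₀ = 0) :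
    IsLocalMin f x₀ ∧ 0 < deriv (deriv f) x₀ := by
  have hfe : f = fun x => ∏ k ∈ Finset.Icc 1 n, ((x ^ 2 - (k : ℝ) ^ 2) / (x ^ 2 + 1)) := funext hf
  subst hfe
  set F : ℝ → ℝ := fun x => ∏ k ∈ Finset.Icc 1 n, ((x ^ 2 - (k : ℝ) ^ 2) / (x ^ 2 + 1)) with hF
  have hn2 : (2:ℝ) ≤ (n:ℝ) := by exact_mod_cast hn
  have hden : ∀ x : ℝ, (0:ℝ) < x^2 + 1 := fun x => by positivity
  -- basic facts about points in the interval
  have hIx : ∀ x ∈ Set.Ioo ((n:ℝ)-1) (n:ℝ), 1 < x := fun x hx => by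
    have := hx.1; linarith
  have hne : ∀ x ∈ Set.Ioo ((n:ℝ)-1) (n:ℝ), ∀ k ∈ Finset.Icc 1 n, x^2 - (k:ℝ)^2 ≠ 0 := by
    intro x hx k hk
    obtain ⟨hx1, hx2⟩ := hx
    simp only [Finset.mem_Icc] at hk
    rcases lt_or_eq_of_le hk.2 with h | h
    · have : (k:ℝ) + 1 ≤ (n:ℝ) := by exact_mod_cast h
      have hk0 : (0:ℝ) ≤ (k:ℝ) := Nat.cast_nonneg k
      nlinarith
    · subst h
      have hx0 : (0:ℝ) ≤ x := by linarith
      nlinarith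
  -- derivative of each factor
  have hgd := cplim_gderiv
  -- F is differentiable everywhere
  have hFd : ∀ x : ℝ, HasDerivAt F
      (∑ k ∈ Finset.Icc 1 n, (∏ j ∈ (Finset.Icc 1 n).erase k,
        ((x ^ 2 - (j : ℝ) ^ 2) / (x ^ 2 + 1))) • (2*x*((k:ℝ)^2+1)/((x^2+1)^2))) x :=
    fun x => HasDerivAt.fun_finsetProd (fun k _ => hgd k x)
  have hFdiff : ∀ x : ℝ, DifferentiableAt ℝ F x := fun x => (hFd x).differentiableAt
  -- logarithmic derivative
  set d : ℕ → ℝ → ℝ := fun k x => 2*x*((k:ℝ)^2+1)/((x^2+1)*(x^2-(k:ℝ)^2)) with hd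
  set h : ℝ → ℝ := fun x => ∑ k ∈ Finset.Icc 1 n, d k x with hh
  have hFh : ∀ x ∈ Set.Ioo ((n:ℝ)-1) (n:ℝ), HasDerivAt F (F x * h x) x := by
    intro x hx
    have := hFd x
    convert this using 1
    rw [hh]
    simp only
    rw [Finset.mul_sum]
    apply Finset.sum_congr rfl
    intro k hk
    have hprod : (∏ j ∈ (Finset.Icc 1 n).erase k, ((x ^ 2 - (j : ℝ) ^ 2) / (x ^ 2 + 1)))
        * ((x ^ 2 - (k : ℝ) ^ 2) / (x ^ 2 + 1)) = F x :=
      Finset.prod_erase_mul _ _ hk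
    rw [smul_eq_mul, ← hprod, hd]
    have h1 : x^2 - (k:ℝ)^2 ≠ 0 := hne x hx k hk
    have h2 : x^2 + 1 ≠ 0 := ne_of_gt (hden x)
    field_simp
  -- derivative of d k
  set d' : ℕ → ℝ → ℝ := fun k x =>
    -(2*((k:ℝ)^2+1) * (3*x^4 + (1-(k:ℝ)^2)*x^2 + (k:ℝ)^2)) / ((x^2+1)*(x^2-(k:ℝ)^2))^2
    with hd'
  have hdk : ∀ k ∈ Finset.Icc 1 n, HasDerivAt (d k) (d' k x₀) x₀ := by
    intro k hk
    have hnum : HasDerivAt (fun x : ℝ => 2*x*((k:ℝ)^2+1)) (2*((k:ℝ)^2+1)) x₀ := by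
      simpa using ((hasDerivAt_id x₀).const_mul 2).mul_const ((k:ℝ)^2+1)
    have hdenom : HasDerivAt (fun x : ℝ => (x^2+1)*(x^2-(k:ℝ)^2))
        ((2*x₀^1)*(x₀^2-(k:ℝ)^2) + (x₀^2+1)*(2*x₀^1)) x₀ := by
      have := (((hasDerivAt_pow 2 x₀).add_const 1).mul ((hasDerivAt_pow 2 x₀).sub_const ((k:ℝ)^2)))
      refine this.congr_deriv ?_
      norm_num only
      try push_cast
      try ring
    have hD : (x₀^2+1)*(x₀^2-(k:ℝ)^2) ≠ 0 :=
      mul_ne_zero (ne_of_gt (hden x₀)) (hne x₀ hx₀ k hk)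
    have := hnum.div hdenom hD
    refine this.congr_deriv ?_
    rw [hd']
    field_simp
    ring
  set S : ℝ := ∑ k ∈ Finset.Icc 1 n, d' k x₀ with hS
  have hh' : HasDerivAt h S x₀ := HasDerivAt.fun_sum hdk
  have hSneg : S < 0 := by
    apply Finset.sum_neg ?_ (Finset.nonempty_Icc.mpr (by omega))
    intro k hk
    simp only [Finset.mem_Icc] at hk
    have hkn : (k:ℝ) ≤ (n:ℝ) := by exact_mod_cast hk.2
    have hx1 : 1 < x₀ := hIx x₀ hx₀
    have hkey : 0 < 3*x₀^4 + (1-(k:ℝ)^2)*x₀^2 + (k:ℝ)^2 :=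
      cplim_key_ineq x₀ (k:ℝ) (le_of_lt hx1) (Nat.cast_nonneg k) (by
        have := hx₀.1; linarith)
    have hD : (x₀^2+1)*(x₀^2-(k:ℝ)^2) ≠ 0 :=
      mul_ne_zero (ne_of_gt (hden x₀)) (hne x₀ hx₀ k (Finset.mem_Icc.mpr hk))
    rw [hd']
    apply div_neg_of_neg_of_pos
    · have : (0:ℝ) < (k:ℝ)^2 + 1 := by positivity
      nlinarith
    · exact pow_two_pos_of_ne_zero hD
  -- F x₀ < 0
  have hFneg : F x₀ < 0 := by
    obtain ⟨m, rfl⟩ : ∃ m, n = m + 1 := ⟨n - 1, by omega⟩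
    rw [hF]
    simp only
    rw [Finset.prod_Icc_succ_top (by omega : 1 ≤ m + 1)]
    have hx1 := hx₀.1
    have hx2 := hx₀.2
    push_cast at hx1 hx2
    apply mul_neg_of_pos_of_neg
    · apply Finset.prod_pos
      intro k hk
      simp only [Finset.mem_Icc] at hk
      have hkm : (k:ℝ) ≤ (m:ℝ) := by exact_mod_cast hk.2
      apply div_pos ?_ (hden x₀)
      nlinarith
    · apply div_neg_of_neg_of_pos ?_ (hden x₀)
      have hx0 : (0:ℝ) ≤ x₀ := by linarith
      push_cast
      nlinarith
  -- h x₀ = 0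
  have hF0 : F x₀ ≠ 0 := ne_of_lt hFneg
  have hderivF : deriv F x₀ = F x₀ * h x₀ := (hFh x₀ hx₀).deriv
  have hh0 : h x₀ = 0 := by
    have : F x₀ * h x₀ = 0 := by rw [← hderivF]; exact hcrit
    exact (mul_eq_zero.mp this).resolve_left hF0
  -- second derivative
  have hFh' : HasDerivAt (fun x => F x * h x) ((F x₀ * h x₀) * h x₀ + F x₀ * S) x₀ :=
    (hFh x₀ hx₀).mul hh'
  have heq : deriv F =ᶠ[nhds x₀] fun x => F x * h x :=
    Filter.eventually_of_mem (Ioo_mem_nhds hx₀.1 hx₀.2) (fun x hx => (hFh x hx).deriv)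
  have hD2 : deriv (deriv F) x₀ = (F x₀ * h x₀) * h x₀ + F x₀ * S := by
    rw [Filter.EventuallyEq.deriv_eq heq]
    exact hFh'.deriv
  have hDpos : 0 < deriv (deriv F) x₀ := by
    rw [hD2, hh0]
    have := mul_pos_of_neg_of_neg hFneg hSneg
    linarith [this]
  refine ⟨?_, hDpos⟩
  -- local min via first derivative test
  have hdf : HasDerivAt (deriv F) ((F x₀ * h x₀) * h x₀ + F x₀ * S) x₀ :=
    hFh'.congr_of_eventuallyEq heq
  have hDpos' : 0 < (F x₀ * h x₀) * h x₀ + F x₀ * S := hD2 ▸ hDpos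
  have hslope : Tendsto (slope (deriv F) x₀) (nhdsWithin x₀ {x₀}ᶜ)
      (nhds ((F x₀ * h x₀) * h x₀ + F x₀ * S)) :=
    hasDerivAt_iff_tendsto_slope.mp hdf
  have hev : ∀ᶠ z in nhdsWithin x₀ {x₀}ᶜ, 0 < slope (deriv F) x₀ z :=
    hslope.eventually (eventually_gt_nhds hDpos')
  have hleft : ∀ᶠ x in nhdsWithin x₀ (Set.Iio x₀), deriv F x ≤ 0 := by
    filter_upwards [hev.filter_mono (nhdsLT_le_nhdsNE x₀),
      eventually_mem_nhdsWithin] with z hz hz'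
    rw [slope_def_field, hcrit, sub_zero] at hz
    have hzx : z - x₀ < 0 := sub_neg.mpr hz'
    rcases div_pos_iff.mp hz with ⟨h1, h2⟩ | ⟨h1, h2⟩
    · linarith
    · linarith
  have hright : ∀ᶠ x in nhdsWithin x₀ (Set.Ioi x₀), 0 ≤ deriv F x := by
    filter_upwards [hev.filter_mono (nhdsGT_le_nhdsNE x₀),
      eventually_mem_nhdsWithin] with z hz hz'
    rw [slope_def_field, hcrit, sub_zero] at hz
    have hzx : (0:ℝ) < z - x₀ := sub_pos.mpr hz'
    rcases div_pos_iff.mp hz with ⟨h1, h2⟩ | ⟨h1, h2⟩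
    · linarith
    · linarith
  exact isLocalMin_of_deriv' (hFdiff x₀).continuousAt
    (Filter.Eventually.of_forall hFdiff) (Filter.Eventually.of_forall hFdiff)
    hleft hright
end
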